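/- arXiv:1101.5302 — 2 statements merged into one kernel-verified Lean document; each statement's English description precedes it below -/
import Mathlib

section
/- If a set of quartets Q defines a phylogenetic tree T (i.e., T is the unique phylogenetic tree on leaf set L(Q) displaying Q), then every interior edge of T is distinguished by at least one quartet in Q. -/
/-- A phylogenetic tree on label set `L`: a finite tree whose degree-1 vertices
(leaves) are bijectively labelled by `L`, and whose interior (non-leaf) vertices
have degree at least 3 (in particular, there are no degree-2 vertices). -/
structure PhyloTree (L : Type) : Type 1 where
  V : Type
  finV : Finite V
  G : SimpleGraph V
  isTree : G.IsTree
  leaf : L → V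
  leaf_inj : Function.Injective leaf
  leaf_deg : ∀ l, (G.neighborSet (leaf l)).ncard = 1
  leaf_of_deg_one : ∀ v, (G.neighborSet v).ncard = 1 → ∃ l, leaf l = v
  interior_deg : ∀ v, (¬ ∃ l, leaf l = v) → 3 ≤ (G.neighborSet v).ncard

namespace PhyloTree

variable {L : Type}

/-- A vertex is interior if it is not a leaf. -/
def IsInterior (T : PhyloTree L) (v : T.V) : Prop := ¬ ∃ l, T.leaf l = v

/-- A phylogenetic tree is binary if every interior vertex has degree exactly 3. -/
def Binary (T : PhyloTree L) : Prop :=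
  ∀ v, T.IsInterior v → (T.G.neighborSet v).ncard = 3

/-- `T` displays the quartet `uv|wx`: the path from `u` to `v` is
vertex-disjoint from the path from `w` to `x`. -/
def Displays (T : PhyloTree L) (u v w x : L) : Prop :=
  ∀ (p : T.G.Walk (T.leaf u) (T.leaf v)) (q : T.G.Walk (T.leaf w) (T.leaf x)),
    p.IsPath → q.IsPath → ∀ a, a ∈ p.support → a ∉ q.support

/-- A quartet `uv|wx` encoded as the tuple `(u, v, w, x)`. -/
abbrev Quartet (L : Type) := L × L × L × L

/-- The set of leaves appearing in a quartet. -/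
def qLeaves (q : Quartet L) : Set L := {q.1, q.2.1, q.2.2.1, q.2.2.2}

def DisplaysQ (T : PhyloTree L) (q : Quartet L) : Prop :=
  T.Displays q.1 q.2.1 q.2.2.1 q.2.2.2

def DisplaysSet (T : PhyloTree L) (Q : Set (Quartet L)) : Prop :=
  ∀ q ∈ Q, T.DisplaysQ q

/-- The edge `e` of `T` separates `{u, v}` from `{w, x}`: after deleting `e`,
`u` and `v` are in one component and `w` and `x` in the other. -/
def Separates (T : PhyloTree L) (e : Sym2 T.V) (u v w x : L) : Prop :=
  e ∈ T.G.edgeSet ∧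
  (T.G.deleteEdges {e}).Reachable (T.leaf u) (T.leaf v) ∧
  (T.G.deleteEdges {e}).Reachable (T.leaf w) (T.leaf x) ∧
  ¬ (T.G.deleteEdges {e}).Reachable (T.leaf u) (T.leaf w)

/-- The quartet `q = uv|wx` distinguishes the edge `e` of `T`:
`e` is the unique cut-edge of `T` separating `{u,v}` from `{w,x}`. -/
def Distinguishes (T : PhyloTree L) (q : Quartet L) (e : Sym2 T.V) : Prop :=
  T.Separates e q.1 q.2.1 q.2.2.1 q.2.2.2 ∧
  ∀ e', T.Separates e' q.1 q.2.1 q.2.2.1 q.2.2.2 → e' = e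

/-- An interior edge: both endpoints are interior vertices. -/
def InteriorEdge (T : PhyloTree L) (e : Sym2 T.V) : Prop :=
  e ∈ T.G.edgeSet ∧ ∀ v ∈ e, T.IsInterior v

/-- Label-preserving isomorphism of phylogenetic trees. -/
def PIso (T T' : PhyloTree L) : Prop :=
  ∃ φ : T.V ≃ T'.V,
    (∀ a b, T.G.Adj a b ↔ T'.G.Adj (φ a) (φ b)) ∧ ∀ l, φ (T.leaf l) = T'.leaf l

/-- The quartet set `Q` defines `T`: `T` displays `Q` and is the unique
phylogenetic tree on the leaf set `L` doing so. -/
def Defines (Q : Set (Quartet L)) (T : PhyloTree L) : Prop :=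
  T.DisplaysSet Q ∧ ∀ T' : PhyloTree L, T'.DisplaysSet Q → PIso T' T

end PhyloTree

/-- Adjacency of the caterpillar graph on `n` leaves (labels `Fin n`, so label
`i` of `{1,…,n}` corresponds to `i - 1 : Fin n`) with interior path
`Fin (n-2)`: leaves `0,1` attach to interior vertex `0`, leaf `k`
(for `2 ≤ k ≤ n-3`) to interior vertex `k-1`, and leaves `n-2, n-1` to
interior vertex `n-3`. -/
def catAdj (n : ℕ) : (Fin n ⊕ Fin (n - 2)) → (Fin n ⊕ Fin (n - 2)) → Prop
  | Sum.inl k, Sum.inr j => (j : ℕ) = min ((k : ℕ) - 1) (n - 3)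
  | Sum.inr j, Sum.inl k => (j : ℕ) = min ((k : ℕ) - 1) (n - 3)
  | Sum.inr j, Sum.inr j' => (j : ℕ) + 1 = (j' : ℕ) ∨ (j' : ℕ) + 1 = (j : ℕ)
  | _, _ => False

/-- The caterpillar graph on `n` leaves. -/
def catGraph (n : ℕ) : SimpleGraph (Fin n ⊕ Fin (n - 2)) where
  Adj a b := catAdj n a b
  symm := by
    constructor
    rintro (k | j) (k' | j') h <;> simp only [catAdj] at h ⊢ <;> tauto
  loopless := by
    constructor
    rintro (k | j) h
    · exact h
    · simp only [catAdj] at h; omega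

/-- `T` is a caterpillar tree whose leaf labelled `σ k` occupies position `k`
(positions as in `catGraph`). -/
def IsCatWith {n : ℕ} (T : PhyloTree (Fin n)) (σ : Fin n → Fin n) : Prop :=
  ∃ φ : T.V ≃ (Fin n ⊕ Fin (n - 2)),
    (∀ a b, T.G.Adj a b ↔ (catGraph n).Adj (φ a) (φ b)) ∧
    ∀ k, φ (T.leaf (σ k)) = Sum.inl k

/-- `T` is the caterpillar tree `T_n` on labels `{1,…,n}` (as `Fin n`). -/
def IsCaterpillar {n : ℕ} (T : PhyloTree (Fin n)) : Prop := IsCatWith T id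


open SimpleGraph

variable {V : Type} {G : SimpleGraph V}

lemma first_vertex {s t : V} (p : G.Walk s t) (P : V → Prop) (hPt : P t) :
    ∃ c, P c ∧ ∃ p' : G.Walk s c, (∀ z ∈ p'.support, z ≠ c → ¬ P z) ∧
      (∀ g ∈ p'.edges, g ∈ p.edges) ∧ (∀ z ∈ p'.support, z ∈ p.support) := by
  induction p with
  | nil => exact ⟨_, hPt, Walk.nil, by simp, by simp, by simp⟩
  | @cons u u₂ w hadj q ih =>
    by_cases hPu : P u
    · exact ⟨u, hPu, Walk.nil, by simp, by simp, by simp⟩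
    · obtain ⟨c, hc, p'', h1, h2, h3⟩ := ih hPt
      refine ⟨c, hc, Walk.cons hadj p'', ?_, ?_, ?_⟩
      · intro z hz hzc
        rw [Walk.support_cons] at hz
        rcases List.mem_cons.mp hz with rfl | hz'
        · exact hPu
        · exact h1 z hz' hzc
      · intro g hg
        rw [Walk.edges_cons] at hg
        rcases List.mem_cons.mp hg with rfl | hg'
        · simp
        · simp only [Walk.edges_cons, List.mem_cons]; right; exact h2 g hg'
      · intro z hz
        rw [Walk.support_cons] at hz
        rcases List.mem_cons.mp hz with rfl | hz'
        · simp
        · simp only [Walk.support_cons, List.mem_cons]; right; exact h3 z hz'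

/-- every edge of an acyclic graph is a bridge -/
lemma tree_bridge (hG : G.IsAcyclic) {x y : V} (hxy : G.Adj x y) :
    ¬ (G.deleteEdges {s(x,y)}).Reachable x y := by
  have := (isAcyclic_iff_forall_adj_isBridge.mp hG) hxy
  rw [isBridge_iff] at this
  exact this

lemma reach_of_adj_reach {H K : SimpleGraph V}
    (h : ∀ x y, H.Adj x y → K.Reachable x y) {u v : V} (huv : H.Reachable u v) :
    K.Reachable u v := by
  obtain ⟨p⟩ := huv
  induction p with
  | nil => exact Reachable.refl _
  | @cons a b c hadj q ih => exact (h a b hadj).trans ih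

/-- membership of support gives reachability to the endpoint -/
lemma reach_of_mem_support {H : SimpleGraph V} {u v z : V} (p : H.Walk u v)
    (hz : z ∈ p.support) : H.Reachable z v := by
  classical exact ⟨p.dropUntil z hz⟩

lemma reach_of_mem_support' {H : SimpleGraph V} {u v z : V} (p : H.Walk u v)
    (hz : z ∈ p.support) : H.Reachable u z := by
  classical exact ⟨p.takeUntil z hz⟩

/-- an edge with both endpoints satisfying P, distinct, is not an edge of the
`first_vertex` walk -/
lemma not_edge_of_first {s c : V} (p' : G.Walk s c) (P : V → Prop)
    (h1 : ∀ z ∈ p'.support, z ≠ c → ¬ P z) {x y : V} (hxy : x ≠ y)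
    (hPx : P x) (hPy : P y) : s(x,y) ∉ p'.edges := by
  intro hmem
  have hx := Walk.fst_mem_support_of_mem_edges p' hmem
  have hy := Walk.snd_mem_support_of_mem_edges p' hmem
  by_cases hxc : x = c
  · exact h1 y hy (by rw [← hxc]; exact (Ne.symm hxy)) hPy
  · exact h1 x hx hxc hPx

/-- in a connected graph, every vertex is on one side of an edge -/
lemma side_total (hc : G.Preconnected) {x y : V} (hxy : G.Adj x y) (v : V) :
    (G.deleteEdges {s(x,y)}).Reachable v x ∨ (G.deleteEdges {s(x,y)}).Reachable v y := by
  obtain ⟨p⟩ := hc v x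
  obtain ⟨c, hc', p', h1, h2, h3⟩ := first_vertex p (fun z => z = x ∨ z = y) (Or.inl rfl)
  have hne : s(x,y) ∉ p'.edges :=
    not_edge_of_first p' _ h1 (G.ne_of_adj hxy) (Or.inl rfl) (Or.inr rfl)
  have hw : (G.deleteEdges {s(x,y)}).Reachable v c :=
    ⟨p'.toDeleteEdges {s(x,y)} (by intro g hg; simp; rintro rfl; exact hne hg)⟩
  rcases hc' with rfl | rfl
  · exact Or.inl hw
  · exact Or.inr hw

/-- In a tree, if u,v are connected avoiding f, then any path from u to v has
all its support reachable from u avoiding f. -/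
lemma path_support_reach (hG : G.IsTree) (s : Set (Sym2 V)) {u v : V}
    (hr : (G.deleteEdges s).Reachable u v) (p : G.Walk u v) (hp : p.IsPath) :
    ∀ z ∈ p.support, (G.deleteEdges s).Reachable u z := by
  classical
  obtain ⟨W⟩ := hr
  set P := W.toPath with hP
  have hPpath : P.1.IsPath := P.2
  have hedges : ∀ g ∈ P.1.edges, g ∈ G.edgeSet := by
    intro g hg
    exact SimpleGraph.edgeSet_mono (G.deleteEdges_le s) (Walk.edges_subset_edgeSet _ hg)
  have htrans : (P.1.transfer G hedges).IsPath := hPpath.transfer _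
  have huniq := hG.existsUnique_path u v
  obtain ⟨p₀, -, hup⟩ := huniq
  have h1 : p = p₀ := hup p hp
  have h2 : P.1.transfer G hedges = p₀ := hup _ htrans
  intro z hz
  rw [h1, ← h2, Walk.support_transfer] at hz
  exact reach_of_mem_support' P.1 hz

/-- In a tree, a path whose edges contain f certifies non-reachability without f. -/
lemma not_reach_of_edge_on_path (hG : G.IsTree) {u v : V} {f : Sym2 V}
    (p : G.Walk u v) (hp : p.IsPath) (hf : f ∈ p.edges) :
    ¬ (G.deleteEdges {f}).Reachable u v := by
  intro hr
  classical
  obtain ⟨W⟩ := hr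
  set P := W.toPath
  have hedges : ∀ g ∈ P.1.edges, g ∈ G.edgeSet := fun g hg =>
    SimpleGraph.edgeSet_mono (G.deleteEdges_le _) (Walk.edges_subset_edgeSet _ hg)
  have htrans : (P.1.transfer G hedges).IsPath := P.2.transfer _
  obtain ⟨p₀, -, hup⟩ := hG.existsUnique_path u v
  have h1 : p = p₀ := hup p hp
  have h2 : P.1.transfer G hedges = p₀ := hup _ htrans
  rw [h1, ← h2, Walk.edges_transfer] at hf
  have := Walk.edges_subset_edgeSet P.1 hf
  rw [SimpleGraph.edgeSet_deleteEdges] at this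
  exact this.2 rfl

/-- Transfer reachability to a graph containing all edges whose endpoints are
on the correct side. -/
lemma side_walk {H K : SimpleGraph V} {u c : V} (hr : H.Reachable u c)
    (hK : ∀ g ∈ H.edgeSet, (∀ z ∈ g, H.Reachable z c) → g ∈ K.edgeSet) :
    K.Reachable u c := by
  classical
  obtain ⟨W⟩ := hr
  set P := W.toPath
  refine ⟨P.1.transfer K ?_⟩
  intro g hg
  refine hK g (Walk.edges_subset_edgeSet _ hg) ?_
  intro z hz
  induction g with
  | _ g1 g2 =>
    rcases Sym2.mem_iff.mp hz with rfl | rfl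
    · exact reach_of_mem_support P.1 (Walk.fst_mem_support_of_mem_edges _ hg)
    · exact reach_of_mem_support P.1 (Walk.snd_mem_support_of_mem_edges _ hg)

/-- Trees have no triangles. -/
lemma tree_no_triangle (hG : G.IsTree) {x y z : V} (hxy : G.Adj x y)
    (hxz : G.Adj x z) (hyz : G.Adj y z) : False := by
  have hp1 : (Walk.cons hxy Walk.nil).IsPath := by simp [hxy.ne]
  have hp2 : (Walk.cons hxz (Walk.cons hyz Walk.nil).reverse).IsPath := by
    simp [Walk.isPath_def]
    refine ⟨⟨hxz.ne, hxy.ne⟩, (hyz.ne).symm⟩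
  obtain ⟨p₀, -, hup⟩ := hG.existsUnique_path x y
  have h1 := hup _ hp1
  have h2 := hup _ hp2
  rw [← h2] at h1
  have := congrArg Walk.length h1
  simp [Walk.length_cons] at this

/-- An invariant preserved along edges is preserved along reachability. -/
lemma phi_invariant {H : SimpleGraph V} (Φ : V → Prop)
    (h : ∀ x y, H.Adj x y → (Φ x ↔ Φ y)) {u v : V} (hr : H.Reachable u v) :
    (Φ u ↔ Φ v) := by
  obtain ⟨p⟩ := hr
  induction p with
  | nil => exact Iff.rfl
  | @cons x y z hadj q ih => exact (h x y hadj).trans ih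

/-! ### The NNI (nearest-neighbour-interchange) graph -/

/-- The graph obtained from `G` by replacing edges `{a,a'}, {b,b'}` with
`{a,b'}, {b,a'}`. -/
def nniG (G : SimpleGraph V) (a b a' b' : V) : SimpleGraph V where
  Adj x y := x ≠ y ∧ ((G.Adj x y ∧ s(x,y) ≠ s(a,a') ∧ s(x,y) ≠ s(b,b'))
    ∨ s(x,y) = s(a,b') ∨ s(x,y) = s(b,a'))
  symm := by
    constructor
    intro x y ⟨hne, h⟩
    refine ⟨hne.symm, ?_⟩
    rw [Sym2.eq_swap (a := y) (b := x)]
    rcases h with ⟨h1, h2⟩ | h | h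
    · exact Or.inl ⟨h1.symm, h2⟩
    · exact Or.inr (Or.inl h)
    · exact Or.inr (Or.inr h)
  loopless := ⟨fun x h => h.1 rfl⟩

lemma nniG_comm (G : SimpleGraph V) (a b a' b' : V) :
    nniG G a b a' b' = nniG G b a b' a' := by
  ext x y
  show _ ∧ _ ↔ _ ∧ _
  constructor <;> (rintro ⟨hne, h⟩; refine ⟨hne, ?_⟩; tauto)

lemma nniG_edgeSet {G : SimpleGraph V} {a b a' b' : V}
    (hne1 : a ≠ b') (hne2 : b ≠ a') {g : Sym2 V} :
    g ∈ (nniG G a b a' b').edgeSet ↔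
      (g ∈ G.edgeSet ∧ g ≠ s(a,a') ∧ g ≠ s(b,b')) ∨ g = s(a,b') ∨ g = s(b,a') := by
  induction g with
  | _ x y =>
    rw [SimpleGraph.mem_edgeSet]
    show (x ≠ y ∧ _) ↔ _
    constructor
    · rintro ⟨hne, h⟩; exact h
    · intro h
      refine ⟨?_, h⟩
      rcases h with ⟨h1, -⟩ | h | h
      · exact h1.ne
      · rw [Sym2.eq_iff] at h
        rcases h with ⟨rfl, rfl⟩ | ⟨rfl, rfl⟩
        · exact hne1
        · exact fun hx => hne1 hx.symm
      · rw [Sym2.eq_iff] at h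
        rcases h with ⟨rfl, rfl⟩ | ⟨rfl, rfl⟩
        · exact hne2
        · exact fun hx => hne2 hx.symm


lemma reach_cases {H : SimpleGraph V} {x y p q : V} (h : s(x,y) = s(p,q))
    (hr : H.Reachable p q) : H.Reachable x y := by
  rw [Sym2.eq_iff] at h
  rcases h with ⟨rfl, rfl⟩ | ⟨rfl, rfl⟩
  · exact hr
  · exact hr.symm

section NNIlemmas

variable {G : SimpleGraph V} {a b a' b' : V}

/-- bundled hypotheses for the NNI move -/
structure NNIHyp (G : SimpleGraph V) (a b a' b' : V) : Prop where
  hG : G.IsTree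
  hab : G.Adj a b
  ha' : G.Adj a a'
  hb' : G.Adj b b'
  ha'b : a' ≠ b
  hb'a : b' ≠ a

namespace NNIHyp

variable (H : NNIHyp G a b a' b')

include H

lemma symmbundle : NNIHyp G b a b' a' :=
  ⟨H.hG, H.hab.symm, H.hb', H.ha', H.hb'a, H.ha'b⟩

lemma nadj_ab' : ¬ G.Adj a b' := fun h => tree_no_triangle H.hG H.hab h H.hb'

lemma nadj_ba' : ¬ G.Adj b a' := fun h => tree_no_triangle H.hG H.hab.symm h H.ha'

lemma ha'b' : a' ≠ b' := by
  rintro rfl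
  exact tree_no_triangle H.hG H.hab H.ha' H.hb'

lemma ne_e_g1 : s(a,b) ≠ s(a,a') := by
  rw [Ne, Sym2.eq_iff]
  rintro (⟨h1, h2⟩ | ⟨h1, h2⟩)
  · exact H.ha'b h2.symm
  · exact H.hab.ne h2.symm

lemma ne_e_g2 : s(a,b) ≠ s(b,b') := by
  rw [Ne, Sym2.eq_iff]
  rintro (⟨h1, h2⟩ | ⟨h1, h2⟩)
  · exact H.hab.ne h1
  · exact H.hb'a h1.symm

lemma ne_g1_g2 : s(a,a') ≠ s(b,b') := by
  rw [Ne, Sym2.eq_iff]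
  rintro (⟨h1, h2⟩ | ⟨h1, h2⟩)
  · exact H.hab.ne h1
  · exact H.hb'a h1.symm

lemma f1_not_mem : s(a,b') ∉ G.edgeSet := H.nadj_ab'

lemma f2_not_mem : s(b,a') ∉ G.edgeSet := H.nadj_ba'

/-- the unmodified edge `{a,b}` is an edge of the NNI graph -/
lemma adj'_ab : (nniG G a b a' b').Adj a b :=
  ⟨H.hab.ne, Or.inl ⟨H.hab, H.ne_e_g1, H.ne_e_g2⟩⟩

lemma adj'_ab' : (nniG G a b a' b').Adj a b' :=
  ⟨H.hb'a.symm, Or.inr (Or.inl rfl)⟩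

lemma adj'_ba' : (nniG G a b a' b').Adj b a' :=
  ⟨H.ha'b.symm, Or.inr (Or.inr rfl)⟩

omit H in
lemma adj'_of_adj {x y : V} (hxy : G.Adj x y) (h1 : s(x,y) ≠ s(a,a'))
    (h2 : s(x,y) ≠ s(b,b')) : (nniG G a b a' b').Adj x y :=
  ⟨hxy.ne, Or.inl ⟨hxy, h1, h2⟩⟩

lemma ne_f1_f2 : s(a,b') ≠ s(b,a') := by
  rw [Ne, Sym2.eq_iff]
  rintro (⟨h1, h2⟩ | ⟨h1, h2⟩)
  · exact H.hab.ne h1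
  · exact H.ha'.ne h1

omit H in
lemma del_adj {K : SimpleGraph V} {f : Sym2 V} {x y : V} (h : K.Adj x y)
    (hne : s(x,y) ≠ f) : (K.deleteEdges {f}).Adj x y := by
  rw [SimpleGraph.deleteEdges_adj]
  exact ⟨h, by simpa using hne⟩

lemma trans1 {f : Sym2 V} (hf : f ∈ G.edgeSet) (hfe : f ≠ s(a,b))
    (hfg1 : f ≠ s(a,a')) (hfg2 : f ≠ s(b,b')) {x y : V} :
    (G.deleteEdges {f}).Reachable x y ↔
      ((nniG G a b a' b').deleteEdges {f}).Reachable x y := by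
  have hnf1 : f ≠ s(a,b') := fun h => H.f1_not_mem (h ▸ hf)
  have hnf2 : f ≠ s(b,a') := fun h => H.f2_not_mem (h ▸ hf)
  constructor
  · refine reach_of_adj_reach ?_
    intro x y hxy
    rw [SimpleGraph.deleteEdges_adj] at hxy
    obtain ⟨hxy, hmem⟩ := hxy
    have hne : s(x,y) ≠ f := by simpa using hmem
    by_cases h1 : s(x,y) = s(a,a')
    · refine reach_cases h1 ?_
      exact ((del_adj H.adj'_ab (fun h => hfe h.symm)).reachable).trans
        ((del_adj H.adj'_ba' (fun h => hnf2 h.symm)).reachable)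
    · by_cases h2 : s(x,y) = s(b,b')
      · refine reach_cases h2 ?_
        exact ((del_adj H.adj'_ab (fun h => hfe h.symm)).reachable).symm.trans
          ((del_adj H.adj'_ab' (fun h => hnf1 h.symm)).reachable)
      · exact (del_adj (adj'_of_adj hxy h1 h2) hne).reachable
  · refine reach_of_adj_reach ?_
    intro x y hxy
    rw [SimpleGraph.deleteEdges_adj] at hxy
    obtain ⟨⟨hne', hcase⟩, hmem⟩ := hxy
    have hne : s(x,y) ≠ f := by simpa using hmem
    rcases hcase with ⟨hxy, -, -⟩ | h | h
    · exact (del_adj hxy hne).reachable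
    · refine reach_cases h ?_
      exact ((del_adj H.hab (fun h => hfe h.symm)).reachable).trans
        ((del_adj H.hb' (fun h => hfg2 h.symm)).reachable)
    · refine reach_cases h ?_
      exact ((del_adj H.hab (fun h => hfe h.symm)).reachable).symm.trans
        ((del_adj H.ha' (fun h => hfg1 h.symm)).reachable)

lemma trans2 {x y : V} :
    (G.deleteEdges {s(b,b')}).Reachable x y ↔
      ((nniG G a b a' b').deleteEdges {s(a,b')}).Reachable x y := by
  have hef1 : s(a,b) ≠ s(a,b') := fun h => H.f1_not_mem (h ▸ ((SimpleGraph.mem_edgeSet G).mpr H.hab))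
  have hg1f1 : s(a,a') ≠ s(a,b') := fun h => H.f1_not_mem (h ▸ ((SimpleGraph.mem_edgeSet G).mpr H.ha'))
  constructor
  · refine reach_of_adj_reach ?_
    intro x y hxy
    rw [SimpleGraph.deleteEdges_adj] at hxy
    obtain ⟨hxy, hmem⟩ := hxy
    have hne : s(x,y) ≠ s(b,b') := by simpa using hmem
    by_cases h1 : s(x,y) = s(a,a')
    · refine reach_cases h1 ?_
      exact ((del_adj H.adj'_ab hef1).reachable).trans
        ((del_adj H.adj'_ba' (fun h => H.ne_f1_f2 h.symm)).reachable)
    · refine (del_adj (adj'_of_adj hxy h1 hne) (fun h => H.f1_not_mem ?_)).reachable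
      rw [← h]
      exact (SimpleGraph.mem_edgeSet G).mpr hxy
  · refine reach_of_adj_reach ?_
    intro x y hxy
    rw [SimpleGraph.deleteEdges_adj] at hxy
    obtain ⟨⟨hne', hcase⟩, hmem⟩ := hxy
    have hne : s(x,y) ≠ s(a,b') := by simpa using hmem
    rcases hcase with ⟨hxy, hg1, hg2⟩ | h | h
    · exact (del_adj hxy hg2).reachable
    · exact absurd h hne
    · refine reach_cases h ?_
      exact ((del_adj H.hab (fun h => H.ne_e_g2 h)).reachable).symm.trans
        ((del_adj H.ha' (fun h => H.ne_g1_g2 h)).reachable)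

lemma trans3 {x y : V} :
    (G.deleteEdges {s(a,a')}).Reachable x y ↔
      ((nniG G a b a' b').deleteEdges {s(b,a')}).Reachable x y := by
  have := trans2 H.symmbundle (x := x) (y := y)
  rwa [← nniG_comm] at this

lemma nni_connected : (nniG G a b a' b').Connected := by
  rw [SimpleGraph.connected_iff]
  refine ⟨?_, H.hG.isConnected.nonempty⟩
  have key : ∀ v, (nniG G a b a' b').Reachable v a := by
    intro v
    obtain ⟨W⟩ := H.hG.isConnected v a
    obtain ⟨c, hc, p', h1, h2, h3⟩ :=
      first_vertex W (fun z => z = a ∨ z = a' ∨ z = b ∨ z = b') (Or.inl rfl)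
    have hng1 : s(a,a') ∉ p'.edges :=
      not_edge_of_first p' _ h1 H.ha'.ne (Or.inl rfl) (Or.inr (Or.inl rfl))
    have hng2 : s(b,b') ∉ p'.edges :=
      not_edge_of_first p' _ h1 H.hb'.ne (Or.inr (Or.inr (Or.inl rfl)))
        (Or.inr (Or.inr (Or.inr rfl)))
    have hreach : (nniG G a b a' b').Reachable v c := by
      refine ⟨p'.transfer _ ?_⟩
      intro g hg
      rw [nniG_edgeSet (fun h => H.hb'a h.symm) (fun h => H.ha'b h.symm)]
      exact Or.inl ⟨Walk.edges_subset_edgeSet W (h2 g hg),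
        fun h => hng1 (h ▸ hg), fun h => hng2 (h ▸ hg)⟩
    rcases hc with rfl | rfl | rfl | rfl
    · exact hreach
    · exact hreach.trans ((H.adj'_ba'.symm.reachable).trans H.adj'_ab.symm.reachable)
    · exact hreach.trans H.adj'_ab.symm.reachable
    · exact hreach.trans H.adj'_ab'.symm.reachable
  exact fun u v => (key u).trans (key v).symm

lemma not_reach_e : ¬ ((nniG G a b a' b').deleteEdges {s(a,b)}).Reachable a b := by
  classical
  set Φ : V → Prop := fun v =>
    ((G.deleteEdges {s(a,b)}).Reachable v a ∧
      ¬ (G.deleteEdges {s(a,a')}).Reachable v a') ∨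
    (G.deleteEdges {s(b,b')}).Reachable v b' with hΦ
  have hbridge_e := tree_bridge H.hG.IsAcyclic H.hab
  have hbridge_g1 := tree_bridge H.hG.IsAcyclic H.ha'
  have hbridge_g2 := tree_bridge H.hG.IsAcyclic H.hb'
  have hΦa : Φ a := Or.inl ⟨Reachable.refl a, hbridge_g1⟩
  have hΦb : ¬ Φ b := by
    rintro (⟨h1, -⟩ | h3)
    · exact hbridge_e h1.symm
    · exact hbridge_g2 h3
  have hΦb' : Φ b' := Or.inr (Reachable.refl b')
  have hΦa' : ¬ Φ a' := by
    rintro (⟨-, h2⟩ | h3)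
    · exact h2 (Reachable.refl a')
    · refine hbridge_g2 (Reachable.trans ?_ h3)
      exact ((del_adj H.hab (fun h => H.ne_e_g2 h)).reachable.symm).trans
        ((del_adj H.ha' (fun h => H.ne_g1_g2 h)).reachable)
  have hinv : ∀ x y, ((nniG G a b a' b').deleteEdges {s(a,b)}).Adj x y → (Φ x ↔ Φ y) := by
    intro x y hxy
    rw [SimpleGraph.deleteEdges_adj] at hxy
    obtain ⟨⟨hne', hcase⟩, hmem⟩ := hxy
    have hnee : s(x,y) ≠ s(a,b) := by simpa using hmem
    rcases hcase with ⟨hxy', hg1, hg2⟩ | h | h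
    · have r1 : (G.deleteEdges {s(a,b)}).Reachable x y := (del_adj hxy' hnee).reachable
      have r2 : (G.deleteEdges {s(a,a')}).Reachable x y := (del_adj hxy' hg1).reachable
      have r3 : (G.deleteEdges {s(b,b')}).Reachable x y := (del_adj hxy' hg2).reachable
      constructor
      · rintro (⟨h1, h2⟩ | h3)
        · exact Or.inl ⟨r1.symm.trans h1, fun hy => h2 (r2.trans hy)⟩
        · exact Or.inr (r3.symm.trans h3)
      · rintro (⟨h1, h2⟩ | h3)
        · exact Or.inl ⟨r1.trans h1, fun hy => h2 (r2.symm.trans hy)⟩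
        · exact Or.inr (r3.trans h3)
    · have key : Φ a ↔ Φ b' := iff_of_true hΦa hΦb'
      rw [Sym2.eq_iff] at h
      rcases h with ⟨rfl, rfl⟩ | ⟨rfl, rfl⟩
      · exact key
      · exact key.symm
    · have key : Φ b ↔ Φ a' := iff_of_false hΦb hΦa'
      rw [Sym2.eq_iff] at h
      rcases h with ⟨rfl, rfl⟩ | ⟨rfl, rfl⟩
      · exact key
      · exact key.symm
  intro hr
  exact hΦb ((phi_invariant Φ hinv hr).mp hΦa)

lemma nni_isTree : (nniG G a b a' b').IsTree := by
  refine ⟨H.nni_connected, ?_⟩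
  rw [SimpleGraph.isAcyclic_iff_forall_adj_isBridge]
  intro x y hxy
  rw [SimpleGraph.isBridge_iff]
  show ¬ ((nniG G a b a' b').deleteEdges {s(x,y)}).Reachable x y
  obtain ⟨hne', hcase⟩ := hxy
  rcases hcase with ⟨hxy', hg1, hg2⟩ | h | h
  · by_cases he : s(x,y) = s(a,b)
    · rw [he]
      rw [Sym2.eq_iff] at he
      rcases he with ⟨rfl, rfl⟩ | ⟨rfl, rfl⟩
      · exact H.not_reach_e
      · exact fun hr => H.not_reach_e hr.symm
    · intro hr
      exact (tree_bridge H.hG.IsAcyclic hxy')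
        ((NNIHyp.trans1 H ((SimpleGraph.mem_edgeSet G).mpr hxy') he hg1 hg2).mpr hr)
  · have key : ¬ ((nniG G a b a' b').deleteEdges {s(a,b')}).Reachable a b' := by
      intro hr
      have h2 := (NNIHyp.trans2 H).mpr hr
      refine tree_bridge H.hG.IsAcyclic H.hb' (Reachable.trans ?_ h2)
      exact ((del_adj H.hab (fun hh => H.ne_e_g2 hh)).reachable).symm
    rw [h]
    rw [Sym2.eq_iff] at h
    rcases h with ⟨rfl, rfl⟩ | ⟨rfl, rfl⟩
    · exact key
    · exact fun hr => key hr.symm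
  · have key : ¬ ((nniG G a b a' b').deleteEdges {s(b,a')}).Reachable b a' := by
      intro hr
      have h2 := (NNIHyp.trans3 H).mpr hr
      refine tree_bridge H.hG.IsAcyclic H.ha' (Reachable.trans ?_ h2)
      exact ((del_adj H.hab (fun hh => H.ne_e_g1 hh)).reachable)
    rw [h]
    rw [Sym2.eq_iff] at h
    rcases h with ⟨rfl, rfl⟩ | ⟨rfl, rfl⟩
    · exact key
    · exact fun hr => key hr.symm

lemma nbr_a : (nniG G a b a' b').neighborSet a = insert b' (G.neighborSet a \ {a'}) := by
  ext y
  simp only [SimpleGraph.mem_neighborSet, Set.mem_insert_iff, Set.mem_diff,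
    Set.mem_singleton_iff]
  constructor
  · rintro ⟨hne, ⟨hxy, hg1, hg2⟩ | h | h⟩
    · refine Or.inr ⟨hxy, ?_⟩
      rintro rfl
      exact hg1 rfl
    · rw [Sym2.eq_iff] at h
      rcases h with ⟨-, rfl⟩ | ⟨h1, -⟩
      · exact Or.inl rfl
      · exact absurd h1.symm H.hb'a
    · rw [Sym2.eq_iff] at h
      rcases h with ⟨h1, -⟩ | ⟨h1, -⟩
      · exact absurd h1 H.hab.ne
      · exact absurd h1 H.ha'.ne
  · rintro (rfl | ⟨hadj, hya'⟩)
    · exact H.adj'_ab'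
    · refine adj'_of_adj hadj ?_ ?_
      · rw [Ne, Sym2.eq_iff]
        rintro (⟨-, h2⟩ | ⟨h1, -⟩)
        · exact hya' h2
        · exact H.ha'.ne h1
      · rw [Ne, Sym2.eq_iff]
        rintro (⟨h1, -⟩ | ⟨h1, -⟩)
        · exact H.hab.ne h1
        · exact H.hb'a h1.symm

lemma nbr_a' : (nniG G a b a' b').neighborSet a' = insert b (G.neighborSet a' \ {a}) := by
  ext y
  simp only [SimpleGraph.mem_neighborSet, Set.mem_insert_iff, Set.mem_diff,
    Set.mem_singleton_iff]
  constructor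
  · rintro ⟨hne, ⟨hxy, hg1, hg2⟩ | h | h⟩
    · refine Or.inr ⟨hxy, ?_⟩
      rintro rfl
      exact hg1 (Sym2.eq_swap)
    · rw [Sym2.eq_iff] at h
      rcases h with ⟨h1, -⟩ | ⟨h1, -⟩
      · exact absurd h1 H.ha'.ne.symm
      · exact absurd h1 H.ha'b'
    · rw [Sym2.eq_iff] at h
      rcases h with ⟨h1, -⟩ | ⟨-, rfl⟩
      · exact absurd h1 H.ha'b
      · exact Or.inl rfl
  · rintro (rfl | ⟨hadj, hya⟩)
    · exact H.adj'_ba'.symm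
    · refine adj'_of_adj hadj ?_ ?_
      · rw [Ne, Sym2.eq_iff]
        rintro (⟨h1, -⟩ | ⟨-, h2⟩)
        · exact H.ha'.ne h1.symm
        · exact hya h2
      · rw [Ne, Sym2.eq_iff]
        rintro (⟨h1, -⟩ | ⟨h1, -⟩)
        · exact H.ha'b h1
        · exact H.ha'b' h1

omit H in
lemma ncard_ins {s : Set V} {x y : V} (hx : x ∈ s) (hy : y ∉ s) (hfin : s.Finite) :
    (insert y (s \ {x})).ncard = s.ncard := by
  rw [Set.ncard_insert_of_notMem (fun h => hy h.1) (hfin.diff (t := {x})),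
    Set.ncard_diff_singleton_add_one hx hfin]

omit H in
lemma nbr_other {v : V} (hva : v ≠ a) (hvb : v ≠ b) (hva' : v ≠ a') (hvb' : v ≠ b') :
    (nniG G a b a' b').neighborSet v = G.neighborSet v := by
  ext y
  simp only [SimpleGraph.mem_neighborSet]
  constructor
  · rintro ⟨hne, ⟨hxy, -, -⟩ | h | h⟩
    · exact hxy
    · rw [Sym2.eq_iff] at h
      rcases h with ⟨h1, -⟩ | ⟨h1, -⟩
      · exact absurd h1 hva
      · exact absurd h1 hvb'
    · rw [Sym2.eq_iff] at h
      rcases h with ⟨h1, -⟩ | ⟨h1, -⟩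
      · exact absurd h1 hvb
      · exact absurd h1 hva'
  · intro hadj
    refine adj'_of_adj hadj ?_ ?_
    · rw [Ne, Sym2.eq_iff]
      rintro (⟨h1, -⟩ | ⟨h1, -⟩)
      · exact hva h1
      · exact hva' h1
    · rw [Ne, Sym2.eq_iff]
      rintro (⟨h1, -⟩ | ⟨h1, -⟩)
      · exact hvb h1
      · exact hvb' h1

lemma nbr_ncard [Finite V] (v : V) :
    ((nniG G a b a' b').neighborSet v).ncard = (G.neighborSet v).ncard := by
  by_cases hva : v = a
  · subst hva
    rw [nbr_a H]
    exact ncard_ins H.ha' H.nadj_ab' (Set.toFinite _)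
  by_cases hvb : v = b
  · subst hvb
    rw [nniG_comm, nbr_a H.symmbundle]
    exact ncard_ins H.hb' H.nadj_ba' (Set.toFinite _)
  by_cases hva' : v = a'
  · subst hva'
    rw [nbr_a' H]
    exact ncard_ins H.ha'.symm (fun h => H.nadj_ba' (SimpleGraph.adj_symm _ h))
      (Set.toFinite _)
  by_cases hvb' : v = b'
  · subst hvb'
    rw [nniG_comm, nbr_a' H.symmbundle]
    exact ncard_ins H.hb'.symm (fun h => H.nadj_ab' (SimpleGraph.adj_symm _ h))
      (Set.toFinite _)
  · rw [nbr_other hva hvb hva' hvb']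

lemma b_not_in_A : ¬ (G.deleteEdges {s(a,a')}).Reachable b a' := fun h =>
  tree_bridge H.hG.IsAcyclic H.ha'
    ((del_adj H.hab H.ne_e_g1).reachable.trans h)

lemma b'_not_in_A : ¬ (G.deleteEdges {s(a,a')}).Reachable b' a' := fun h =>
  H.b_not_in_A ((del_adj H.hb' (fun hh => H.ne_g1_g2 hh.symm)).reachable.trans h)

/-- every vertex on the `A`-side reaches `b` in the NNI graph minus `e` -/
lemma A_reach_b {v : V} (hv : (G.deleteEdges {s(a,a')}).Reachable v a') :
    ((nniG G a b a' b').deleteEdges {s(a,b)}).Reachable v b := by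
  have step : ((nniG G a b a' b').deleteEdges {s(a,b)}).Reachable v a' := by
    refine side_walk hv ?_
    intro g hg hreach
    rw [SimpleGraph.edgeSet_deleteEdges] at hg ⊢
    have hbg : b ∉ g := fun hb => H.b_not_in_A (hreach b hb)
    refine ⟨(nniG_edgeSet (fun h => H.hb'a h.symm) (fun h => H.ha'b h.symm)).mpr
      (Or.inl ⟨hg.1, ?_, ?_⟩), ?_⟩
    · exact fun hh => hg.2 (Set.mem_singleton_iff.mpr hh)
    · intro hh; rw [hh] at hbg; exact hbg (Sym2.mem_mk_left b b')
    · intro hh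
      rw [Set.mem_singleton_iff] at hh
      rw [hh] at hbg
      exact hbg (Sym2.mem_mk_right a b)
  refine step.trans ?_
  exact (del_adj H.adj'_ba' (fun h => H.f2_not_mem
    (by rw [h]; exact (SimpleGraph.mem_edgeSet G).mpr H.hab))).reachable.symm

/-- a vertex on the `a`-side of `e` but not in `A` reaches `a` in the NNI graph
minus `e` -/
lemma aside_reach_a {v : V} (hv : (G.deleteEdges {s(a,b)}).Reachable v a)
    (hvA : ¬ (G.deleteEdges {s(a,a')}).Reachable v a') :
    ((nniG G a b a' b').deleteEdges {s(a,b)}).Reachable v a := by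
  obtain ⟨W⟩ := hv
  obtain ⟨c, hc, p', h1, h2, h3⟩ :=
    first_vertex W (fun z => z = a ∨ z = a' ∨ z = b ∨ z = b') (Or.inl rfl)
  have hng1 : s(a,a') ∉ p'.edges :=
    not_edge_of_first p' _ h1 H.ha'.ne (Or.inl rfl) (Or.inr (Or.inl rfl))
  have hng2 : s(b,b') ∉ p'.edges :=
    not_edge_of_first p' _ h1 H.hb'.ne (Or.inr (Or.inr (Or.inl rfl)))
      (Or.inr (Or.inr (Or.inr rfl)))
  have hedges : ∀ g ∈ p'.edges, g ∈ G.edgeSet ∧ g ≠ s(a,b) ∧ g ≠ s(a,a') ∧ g ≠ s(b,b') := by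
    intro g hg
    have := Walk.edges_subset_edgeSet W (h2 g hg)
    rw [SimpleGraph.edgeSet_deleteEdges] at this
    exact ⟨this.1, by simpa using this.2, fun h => hng1 (h ▸ hg), fun h => hng2 (h ▸ hg)⟩
  have hreach1 : ((nniG G a b a' b').deleteEdges {s(a,b)}).Reachable v c := by
    refine ⟨p'.transfer _ ?_⟩
    intro g hg
    obtain ⟨h4, h5, h6, h7⟩ := hedges g hg
    rw [SimpleGraph.edgeSet_deleteEdges]
    exact ⟨(nniG_edgeSet (fun h => H.hb'a h.symm) (fun h => H.ha'b h.symm)).mpr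
      (Or.inl ⟨h4, h6, h7⟩), by simpa using h5⟩
  have hreach2 : (G.deleteEdges {s(a,a')}).Reachable v c := by
    refine ⟨p'.transfer _ ?_⟩
    intro g hg
    obtain ⟨h4, -, h6, -⟩ := hedges g hg
    rw [SimpleGraph.edgeSet_deleteEdges]
    exact ⟨h4, by simpa using h6⟩
  have hcmem : (G.deleteEdges {s(a,b)}).Reachable c a := reach_of_mem_support W (h3 c p'.end_mem_support)
  rcases hc with rfl | rfl | rfl | rfl
  · exact hreach1
  · exact absurd hreach2 hvA
  · exact absurd hcmem.symm (tree_bridge H.hG.IsAcyclic H.hab)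
  · refine absurd (((del_adj H.hb' (fun h => H.ne_e_g2 h.symm)).reachable.trans
      hcmem).symm) (tree_bridge H.hG.IsAcyclic H.hab)

end NNIHyp

/-- vertices on the side of a neighbour `z ≠ b` of `a` lie on the `a`-side of
`{a,b}` -/
lemma side_step {G : SimpleGraph V} {a b z : V} (hG : G.IsTree) (hab : G.Adj a b)
    (hz : G.Adj a z) (hzb : z ≠ b) {v : V}
    (hv : (G.deleteEdges {s(a,z)}).Reachable v z) :
    (G.deleteEdges {s(a,b)}).Reachable v a := by
  have hez : s(a,b) ≠ s(a,z) := by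
    rw [Ne, Sym2.eq_iff]
    rintro (⟨-, h2⟩ | ⟨-, h2⟩)
    · exact hzb h2.symm
    · exact hab.ne h2.symm
  have haz : ¬ (G.deleteEdges {s(a,z)}).Reachable a z := tree_bridge hG.IsAcyclic hz
  have key : (G.deleteEdges {s(a,b)}).Reachable v z := by
    refine side_walk hv ?_
    intro g hg hreach
    rw [SimpleGraph.edgeSet_deleteEdges] at hg ⊢
    refine ⟨hg.1, ?_⟩
    rw [Set.mem_singleton_iff]
    rintro rfl
    exact haz (((NNIHyp.del_adj hab hez).reachable).trans
      (hreach b (Sym2.mem_mk_right a b)))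
  exact key.trans (NNIHyp.del_adj hz (fun h => hez h.symm)).reachable.symm

/-- sides at two distinct neighbours of `a` are disjoint -/
lemma sides_disjoint {G : SimpleGraph V} {a z z' : V} (hG : G.IsTree)
    (hz : G.Adj a z) (hz' : G.Adj a z') (hzz' : z ≠ z') {v : V}
    (h1 : (G.deleteEdges {s(a,z)}).Reachable v z)
    (h2 : (G.deleteEdges {s(a,z')}).Reachable v z') : False := by
  have hne : s(a,z) ≠ s(a,z') := by
    rw [Ne, Sym2.eq_iff]
    rintro (⟨-, h⟩ | ⟨h, -⟩)
    · exact hzz' h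
    · exact hz'.ne h
  have key : (G.deleteEdges {s(a,z')}).Reachable v z := by
    refine side_walk h1 ?_
    intro g hg hreach
    rw [SimpleGraph.edgeSet_deleteEdges] at hg ⊢
    refine ⟨hg.1, ?_⟩
    rw [Set.mem_singleton_iff]
    rintro rfl
    exact tree_bridge hG.IsAcyclic hz (hreach a (Sym2.mem_mk_left a z'))
  have : (G.deleteEdges {s(a,z')}).Reachable a z' :=
    ((NNIHyp.del_adj hz hne).reachable).trans (key.symm.trans h2)
  exact tree_bridge hG.IsAcyclic hz' this

end NNIlemmas

namespace PhyloTree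
variable {L : Type}

lemma displays_of_separates (T : PhyloTree L) {f : Sym2 T.V} {u v w x : L}
    (h : T.Separates f u v w x) : T.Displays u v w x := by
  intro p q hp hq z hzp hzq
  have h1 := path_support_reach T.isTree {f} h.2.1 p hp z hzp
  have h2 := path_support_reach T.isTree {f} h.2.2.1 q hq z hzq
  exact h.2.2.2 (h1.trans h2.symm)

lemma exists_separates_of_displays (T : PhyloTree L) {u v w x : L}
    (hd : T.Displays u v w x) : ∃ f, T.Separates f u v w x := by
  classical
  have conn := T.isTree.isConnected
  obtain ⟨p0⟩ := conn (T.leaf u) (T.leaf v)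
  obtain ⟨q0⟩ := conn (T.leaf w) (T.leaf x)
  set p := p0.toPath with hpdef
  set q := q0.toPath with hqdef
  have hdisj : ∀ z ∈ p.1.support, z ∉ q.1.support := hd p.1 q.1 p.2 q.2
  obtain ⟨r0⟩ := conn (T.leaf u) (T.leaf w)
  set r := r0.toPath with hrdef
  have hwp : (T.leaf w) ∉ p.1.support := by
    intro hmem
    exact hdisj _ hmem q.1.start_mem_support
  obtain ⟨c, hc, p', h1, h2, h3⟩ :=
    first_vertex r.1.reverse (fun z => z ∈ p.1.support) p.1.start_mem_support
  have hcw : T.leaf w ≠ c := by rintro rfl; exact hwp hc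
  obtain ⟨c₂, hadj, rest, hrev⟩ := Walk.exists_eq_cons_of_ne (Ne.symm hcw) p'.reverse
  have hc₂mem : c₂ ∈ p'.support := by
    have : c₂ ∈ p'.reverse.support := by
      rw [hrev, Walk.support_cons]
      exact List.mem_cons_of_mem _ rest.start_mem_support
    rwa [Walk.support_reverse, List.mem_reverse] at this
  have hc₂ : c₂ ∉ p.1.support := h1 c₂ hc₂mem (Ne.symm hadj.ne)
  have hfr : s(c, c₂) ∈ r.1.edges := by
    have : s(c, c₂) ∈ p'.reverse.edges := by
      rw [hrev, Walk.edges_cons]; exact List.mem_cons_self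
    rw [Walk.edges_reverse, List.mem_reverse] at this
    have := h2 _ this
    rwa [Walk.edges_reverse, List.mem_reverse] at this
  refine ⟨s(c, c₂), hadj, ?_, ?_, ?_⟩
  · refine ⟨p.1.toDeleteEdges _ ?_⟩
    intro g hg
    simp only [Set.mem_singleton_iff]
    rintro rfl
    exact hc₂ (Walk.snd_mem_support_of_mem_edges _ hg)
  · refine ⟨q.1.toDeleteEdges _ ?_⟩
    intro g hg
    simp only [Set.mem_singleton_iff]
    rintro rfl
    exact hdisj c hc (Walk.fst_mem_support_of_mem_edges _ hg)
  · exact not_reach_of_edge_on_path T.isTree r.1 r.2 hfr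

end PhyloTree

namespace PhyloTree

variable {L : Type}

lemma exists_leaf_side (T : PhyloTree L) : ∀ (n : ℕ) {x y : T.V}, T.G.Adj x y →
    {v | (T.G.deleteEdges {s(x,y)}).Reachable v y}.ncard ≤ n →
    ∃ l, (T.G.deleteEdges {s(x,y)}).Reachable (T.leaf l) y := by
  have : Finite T.V := T.finV
  intro n
  induction n with
  | zero =>
    intro x y hxy hcard
    exfalso
    have hy : y ∈ {v | (T.G.deleteEdges {s(x,y)}).Reachable v y} := Reachable.refl y
    have := Set.ncard_eq_zero (Set.toFinite _) |>.mp (Nat.le_zero.mp hcard)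
    rw [this] at hy
    exact hy
  | succ n ih =>
    intro x y hxy hcard
    by_cases hleaf : ∃ l, T.leaf l = y
    · obtain ⟨l, rfl⟩ := hleaf
      exact ⟨l, Reachable.refl _⟩
    · have hdeg := T.interior_deg y hleaf
      have hz : ∃ z, T.G.Adj y z ∧ z ≠ x := by
        by_contra hcon
        push_neg at hcon
        have hsub : T.G.neighborSet y ⊆ {x} := by
          intro z hz
          exact hcon z hz
        have := Set.ncard_le_ncard hsub (Set.toFinite _)
        rw [Set.ncard_singleton] at this
        omega
      obtain ⟨z, hyz, hzx⟩ := hz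
      have hswap : ({s(x,y)} : Set (Sym2 T.V)) = {s(y,x)} := by rw [Sym2.eq_swap]
      have hsub : {v | (T.G.deleteEdges {s(y,z)}).Reachable v z} ⊆
          {v | (T.G.deleteEdges {s(x,y)}).Reachable v y} := by
        intro v hv
        have := side_step T.isTree hxy.symm hyz hzx hv
        show (T.G.deleteEdges {s(x,y)}).Reachable v y
        rwa [hswap]
      have hyS : y ∈ {v | (T.G.deleteEdges {s(x,y)}).Reachable v y} := Reachable.refl y
      have hynS : y ∉ {v | (T.G.deleteEdges {s(y,z)}).Reachable v z} :=
        tree_bridge T.isTree.IsAcyclic hyz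
      have hss := (Set.ssubset_iff_of_subset hsub).mpr ⟨y, hyS, hynS⟩
      have hlt := Set.ncard_lt_ncard hss (Set.toFinite _)
      obtain ⟨l, hl⟩ := ih hyz (by omega)
      exact ⟨l, hsub hl⟩

lemma piso_displays {T1 T2 : PhyloTree L} (h : PIso T1 T2) {u v w x : L}
    (hd : T2.Displays u v w x) : T1.Displays u v w x := by
  obtain ⟨φ, hadj, hleaf⟩ := h
  intro p q hp hq z hzp hzq
  let f : T1.G →g T2.G := ⟨φ, fun hxy => (hadj _ _).mp hxy⟩
  have hφinj : Function.Injective f := φ.injective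
  let p' := ((p.map f).copy (hleaf u) (hleaf v))
  let q' := ((q.map f).copy (hleaf w) (hleaf x))
  have hp' : p'.IsPath := by
    rw [Walk.isPath_copy]
    exact Walk.map_isPath_of_injective hφinj hp
  have hq' : q'.IsPath := by
    rw [Walk.isPath_copy]
    exact Walk.map_isPath_of_injective hφinj hq
  refine hd p' q' hp' hq' (φ z) ?_ ?_
  · show φ z ∈ p'.support
    rw [Walk.support_copy, Walk.support_map]
    exact List.mem_map_of_mem hzp
  · show φ z ∈ q'.support
    rw [Walk.support_copy, Walk.support_map]
    exact List.mem_map_of_mem hzq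

end PhyloTree

/-- If `Q` defines `T`, then every interior edge of `T` is distinguished by some
quartet in `Q`.  (The hypothesis `hcov` says the leaf set of `T` is `L(Q)`.) -/
theorem stmt9 {L : Type} (Q : Set (PhyloTree.Quartet L)) (T : PhyloTree L)
    (hcov : ∀ l : L, ∃ q ∈ Q, l ∈ PhyloTree.qLeaves q)
    (hdef : PhyloTree.Defines Q T) :
    ∀ e : Sym2 T.V, T.InteriorEdge e → ∃ q ∈ Q, T.Distinguishes q e := by
  classical
  intro e
  induction e using Sym2.ind with
  | _ a b =>
  intro he
  by_contra hno
  push_neg at hno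
  have hfin : Finite T.V := T.finV
  have hab : T.G.Adj a b := he.1
  have hint_a : T.IsInterior a := he.2 a (Sym2.mem_mk_left a b)
  have hint_b : T.IsInterior b := he.2 b (Sym2.mem_mk_right a b)
  -- pick two further neighbours of an interior endpoint
  have hpick : ∀ v w : T.V, T.G.Adj v w → T.IsInterior v →
      ∃ z z', T.G.Adj v z ∧ T.G.Adj v z' ∧ z ≠ w ∧ z' ≠ w ∧ z ≠ z' := by
    intro v w hvw hint
    have hdeg := T.interior_deg v hint
    have hmem : w ∈ T.G.neighborSet v := hvw
    have hd1 := Set.ncard_diff_singleton_add_one hmem (Set.toFinite _)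
    have h2 : 1 < (T.G.neighborSet v \ {w}).ncard := by omega
    rw [Set.one_lt_ncard_iff (Set.toFinite _)] at h2
    obtain ⟨z, z', hz, hz', hne⟩ := h2
    exact ⟨z, z', hz.1, hz'.1, hz.2, hz'.2, hne⟩
  obtain ⟨a', a'', ha', ha'', ha'b, ha''b, ha'a''⟩ := hpick a b hab hint_a
  obtain ⟨b', b'', hb', hb'', hb'a, hb''a, hb'b''⟩ := hpick b a hab.symm hint_b
  have H : NNIHyp T.G a b a' b' := ⟨T.isTree, hab, ha', hb', ha'b, hb'a⟩
  -- the NNI tree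
  let T' : PhyloTree L :=
    { V := T.V
      finV := T.finV
      G := nniG T.G a b a' b'
      isTree := H.nni_isTree
      leaf := T.leaf
      leaf_inj := T.leaf_inj
      leaf_deg := fun l => by rw [H.nbr_ncard]; exact T.leaf_deg l
      leaf_of_deg_one := fun v hv => T.leaf_of_deg_one v (by rwa [H.nbr_ncard] at hv)
      interior_deg := fun v hv => by rw [H.nbr_ncard]; exact T.interior_deg v hv }
  -- the four special leaves
  obtain ⟨lu, hlu⟩ := T.exists_leaf_side _ ha' le_rfl
  obtain ⟨lv, hlv⟩ := T.exists_leaf_side _ ha'' le_rfl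
  obtain ⟨lw, hlw⟩ := T.exists_leaf_side _ hb' le_rfl
  obtain ⟨lx, hlx⟩ := T.exists_leaf_side _ hb'' le_rfl
  have hswapset : ({s(b,a)} : Set (Sym2 T.V)) = {s(a,b)} := by rw [Sym2.eq_swap]
  have hlu_a : (T.G.deleteEdges {s(a,b)}).Reachable (T.leaf lu) a :=
    side_step T.isTree hab ha' ha'b hlu
  have hlv_a : (T.G.deleteEdges {s(a,b)}).Reachable (T.leaf lv) a :=
    side_step T.isTree hab ha'' ha''b hlv
  have hlw_b : (T.G.deleteEdges {s(a,b)}).Reachable (T.leaf lw) b := by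
    have := side_step T.isTree hab.symm hb' hb'a hlw
    rwa [hswapset] at this
  have hlx_b : (T.G.deleteEdges {s(a,b)}).Reachable (T.leaf lx) b := by
    have := side_step T.isTree hab.symm hb'' hb''a hlx
    rwa [hswapset] at this
  have hlvA : ¬ (T.G.deleteEdges {s(a,a')}).Reachable (T.leaf lv) a' :=
    fun h => sides_disjoint T.isTree ha'' ha' ha'a''.symm hlv h
  have hlxC : ¬ (T.G.deleteEdges {s(b,b')}).Reachable (T.leaf lx) b' :=
    fun h => sides_disjoint T.isTree hb'' hb' hb'b''.symm hlx h
  have hbridge_e := tree_bridge T.isTree.IsAcyclic hab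
  -- e separates the special quartet in T
  have hsep_e : T.Separates s(a,b) lu lv lw lx := by
    refine ⟨(SimpleGraph.mem_edgeSet T.G).mpr hab, hlu_a.trans hlv_a.symm,
      hlw_b.trans hlx_b.symm, ?_⟩
    intro hr
    exact hbridge_e (hlu_a.symm.trans (hr.trans hlw_b))
  -- e is the unique separating edge for the special quartet in T
  have huniq : ∀ f, T.Separates f lu lv lw lx → f = s(a,b) := by
    intro f hf
    obtain ⟨hfE, hruv, hrwx, hnuw⟩ := hf
    obtain ⟨W1⟩ := hruv
    obtain ⟨W2⟩ := hrwx
    have hg1W : s(a,a') ∈ W1.edges := by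
      by_contra hng
      have hreach : (T.G.deleteEdges {s(a,a')}).Reachable (T.leaf lu) (T.leaf lv) := by
        refine ⟨W1.transfer _ ?_⟩
        intro g hg
        have hgE := Walk.edges_subset_edgeSet W1 hg
        rw [SimpleGraph.edgeSet_deleteEdges] at hgE ⊢
        exact ⟨hgE.1, fun hmem => hng (Set.mem_singleton_iff.mp hmem ▸ hg)⟩
      exact hlvA (hreach.symm.trans hlu)
    have hg2W : s(b,b') ∈ W2.edges := by
      by_contra hng
      have hreach : (T.G.deleteEdges {s(b,b')}).Reachable (T.leaf lw) (T.leaf lx) := by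
        refine ⟨W2.transfer _ ?_⟩
        intro g hg
        have hgE := Walk.edges_subset_edgeSet W2 hg
        rw [SimpleGraph.edgeSet_deleteEdges] at hgE ⊢
        exact ⟨hgE.1, fun hmem => hng (Set.mem_singleton_iff.mp hmem ▸ hg)⟩
      exact hlxC (hreach.symm.trans hlw)
    have hlua : (T.G.deleteEdges {f}).Reachable (T.leaf lu) a :=
      reach_of_mem_support' W1 (Walk.fst_mem_support_of_mem_edges W1 hg1W)
    have hlwb : (T.G.deleteEdges {f}).Reachable (T.leaf lw) b :=
      reach_of_mem_support' W2 (Walk.fst_mem_support_of_mem_edges W2 hg2W)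
    by_contra hfe
    refine hnuw (hlua.trans (Reachable.trans ?_ hlwb.symm))
    exact (NNIHyp.del_adj hab (fun h => hfe h.symm)).reachable
  -- T' displays Q
  have hdisp' : T'.DisplaysSet Q := by
    intro q hq
    have hd := hdef.1 q hq
    obtain ⟨f, hfsep⟩ := PhyloTree.exists_separates_of_displays T hd
    have hsep_ne : ∃ f, T.Separates f q.1 q.2.1 q.2.2.1 q.2.2.2 ∧ f ≠ s(a,b) := by
      by_cases hfe : f = s(a,b)
      · subst hfe
        have hnd := hno q hq
        rw [PhyloTree.Distinguishes] at hnd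
        have := (not_and.mp hnd) hfsep
        push_neg at this
        obtain ⟨f', hf', hfne⟩ := this
        exact ⟨f', hf', hfne⟩
      · exact ⟨f, hfsep, hfe⟩
    obtain ⟨f, ⟨hfE, h1, h2, h3⟩, hfe⟩ := hsep_ne
    by_cases hf1 : f = s(a,a')
    · subst hf1
      refine PhyloTree.displays_of_separates T' (f := s(b,a'))
        ⟨(SimpleGraph.mem_edgeSet _).mpr H.adj'_ba', (NNIHyp.trans3 H).mp h1,
          (NNIHyp.trans3 H).mp h2, fun hr => h3 ((NNIHyp.trans3 H).mpr hr)⟩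
    by_cases hf2 : f = s(b,b')
    · subst hf2
      refine PhyloTree.displays_of_separates T' (f := s(a,b'))
        ⟨(SimpleGraph.mem_edgeSet _).mpr H.adj'_ab', (NNIHyp.trans2 H).mp h1,
          (NNIHyp.trans2 H).mp h2, fun hr => h3 ((NNIHyp.trans2 H).mpr hr)⟩
    · refine PhyloTree.displays_of_separates T' (f := f)
        ⟨(nniG_edgeSet (fun h => H.hb'a h.symm) (fun h => H.ha'b h.symm)).mpr
          (Or.inl ⟨hfE, hf1, hf2⟩), (NNIHyp.trans1 H hfE hfe hf1 hf2).mp h1,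
          (NNIHyp.trans1 H hfE hfe hf1 hf2).mp h2,
          fun hr => h3 ((NNIHyp.trans1 H hfE hfe hf1 hf2).mpr hr)⟩
  -- the isomorphism and the contradiction
  have hpiso := hdef.2 T' hdisp'
  have hTdisp : T.Displays lu lv lw lx := PhyloTree.displays_of_separates T hsep_e
  have hT'disp : T'.Displays lu lv lw lx := PhyloTree.piso_displays hpiso hTdisp
  obtain ⟨f', hf'⟩ := PhyloTree.exists_separates_of_displays T' hT'disp
  obtain ⟨hf'E, h1, h2, h3⟩ := hf'
  have hf'E' := (nniG_edgeSet (fun h => H.hb'a h.symm) (fun h => H.ha'b h.symm)).mp hf'E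
  rcases hf'E' with ⟨hfE', hg1, hg2⟩ | hE | hE
  · by_cases hfe : f' = s(a,b)
    · subst hfe
      have hlu' := H.A_reach_b hlu
      have hlv' := H.aside_reach_a hlv_a hlvA
      exact tree_bridge H.nni_isTree.IsAcyclic H.adj'_ab
        ((hlu'.symm.trans (h1.trans hlv')).symm)
    · have hsepT : T.Separates f' lu lv lw lx :=
        ⟨hfE', (NNIHyp.trans1 H hfE' hfe hg1 hg2).mpr h1, (NNIHyp.trans1 H hfE' hfe hg1 hg2).mpr h2,
          fun hr => h3 ((NNIHyp.trans1 H hfE' hfe hg1 hg2).mp hr)⟩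
      exact hfe (huniq f' hsepT)
  · subst hE
    have hsepT : T.Separates s(b,b') lu lv lw lx :=
      ⟨(SimpleGraph.mem_edgeSet _).mpr hb', (NNIHyp.trans2 H).mpr h1, (NNIHyp.trans2 H).mpr h2,
        fun hr => h3 ((NNIHyp.trans2 H).mp hr)⟩
    exact H.ne_e_g2 (huniq _ hsepT).symm
  · subst hE
    have hsepT : T.Separates s(a,a') lu lv lw lx :=
      ⟨(SimpleGraph.mem_edgeSet _).mpr ha', (NNIHyp.trans3 H).mpr h1, (NNIHyp.trans3 H).mpr h2,
        fun hr => h3 ((NNIHyp.trans3 H).mp hr)⟩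
    exact H.ne_e_g1 (huniq _ hsepT).symm
end

section
/- Every definitive quartet set on leaf set {1, 2, …, n} (n ≥ 4) contains at least n − 3 quartets. -/
open SimpleGraph

section Generic
variable {V : Type} {G : SimpleGraph V}

/-- transform a walk along a vertex map where each edge maps to a given walk -/
def expWalk {V' : Type} {G' : SimpleGraph V'} (f : V → V')
    (F : ∀ a b, G.Adj a b → G'.Walk (f a) (f b)) :
    ∀ {u v : V}, G.Walk u v → G'.Walk (f u) (f v)
  | _, _, .nil => .nil
  | _, _, .cons h p => (F _ _ h).append (expWalk f F p)

lemma expWalk_support {V' : Type} {G' : SimpleGraph V'} (f : V → V')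
    (F : ∀ a b, G.Adj a b → G'.Walk (f a) (f b)) (w0 : V')
    (hF : ∀ a b hab, ∀ z ∈ (F a b hab).support, z = f a ∨ z = f b ∨ z = w0) :
    ∀ {u v : V} (p : G.Walk u v), ∀ z ∈ (expWalk f F p).support,
      (∃ t ∈ p.support, f t = z) ∨ z = w0 := by
  intro u v p
  induction p with
  | nil => intro z hz; simp only [expWalk, Walk.support_nil, List.mem_singleton] at hz
           exact Or.inl ⟨_, by simp, hz.symm⟩
  | @cons a b c h p ih =>
    intro z hz
    rw [expWalk, Walk.mem_support_append_iff] at hz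
    rcases hz with hz | hz
    · rcases hF _ _ h z hz with h1 | h1 | h1
      · exact Or.inl ⟨a, by simp, h1.symm⟩
      · exact Or.inl ⟨b, by simp, h1.symm⟩
      · exact Or.inr h1
    · rcases ih z hz with ⟨t, ht, ht2⟩ | h1
      · exact Or.inl ⟨t, by simp [ht], ht2⟩
      · exact Or.inr h1

lemma reachable_of_mem_support {u v z : V} (p : G.Walk u v) (hz : z ∈ p.support) :
    G.Reachable u z := by
  classical
  exact (p.takeUntil z hz).reachable

lemma reachable_deleteEdges_trans {e : Sym2 V} {x y : V}
    (hxy : e = s(x, y)) (hr : (G.deleteEdges {e}).Reachable x y)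
    {u v : V} (p : G.Walk u v) : (G.deleteEdges {e}).Reachable u v := by
  induction p with
  | nil => exact Reachable.refl _
  | @cons a b c h p ih =>
    refine Reachable.trans ?_ ih
    by_cases hab : s(a, b) = e
    · rw [hxy, Sym2.eq_iff] at hab
      rcases hab with ⟨rfl, rfl⟩ | ⟨rfl, rfl⟩
      · exact hr
      · exact hr.symm
    · exact Adj.reachable (by simp [hab, h])

lemma connected_deleteEdges_of_reachable {x y : V} (hG : G.Connected)
    (hr : (G.deleteEdges {s(x, y)}).Reachable x y) :
    (G.deleteEdges {s(x, y)}).Connected := by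
  have : Nonempty V := hG.nonempty
  exact Connected.mk (fun u v => reachable_deleteEdges_trans rfl hr ((hG u v).some))

lemma conn_card_le_edges [Fintype V] :
    ∀ (m : ℕ) (G : SimpleGraph V), G.edgeSet.ncard = m → G.Connected →
      Fintype.card V ≤ m + 1 := by
  intro m
  induction m using Nat.strong_induction_on with
  | _ m ih =>
    intro G hm hG
    by_cases hac : G.IsAcyclic
    · have ht : G.IsTree := ⟨hG, hac⟩
      classical
      have := ht.card_edgeFinset
      rw [Set.ncard_eq_toFinset_card'] at hm
      rw [← this]
      simp only [edgeFinset] at *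
      omega
    · rw [isAcyclic_iff_forall_adj_isBridge] at hac
      push_neg at hac
      obtain ⟨x, y, hxy, hbr⟩ := hac
      rw [isBridge_iff] at hbr
      push_neg at hbr
      have hr : (G.deleteEdges {s(x, y)}).Reachable x y := by
        exact hbr
      have hconn := connected_deleteEdges_of_reachable hG hr
      have hcard : (G.deleteEdges {s(x, y)}).edgeSet.ncard = m - 1 := by
        rw [edgeSet_deleteEdges]
        rw [Set.ncard_diff_singleton_of_mem ((SimpleGraph.mem_edgeSet _).mpr hxy)]
        omega
      have hmpos : 0 < m := by
        rw [← hm]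
        have : s(x,y) ∈ G.edgeSet := ((SimpleGraph.mem_edgeSet _).mpr hxy)
        have := Set.ncard_pos (G.edgeSet.toFinite) |>.mpr ⟨_, this⟩
        omega
      have := ih (m-1) (by omega) _ hcard hconn
      omega

lemma isTree_of_conn_card [Fintype V] (hG : G.Connected)
    (h2 : G.edgeSet.ncard + 1 ≤ Fintype.card V) : G.IsTree := by
  refine ⟨hG, ?_⟩
  rw [isAcyclic_iff_forall_adj_isBridge]
  intro x y hxy
  rw [isBridge_iff]
  refine fun hr => ?_
  exfalso
  have hr' : (G.deleteEdges {s(x,y)}).Reachable x y := hr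
  have hconn := connected_deleteEdges_of_reachable hG hr'
  have hcard : (G.deleteEdges {s(x, y)}).edgeSet.ncard = G.edgeSet.ncard - 1 := by
    rw [edgeSet_deleteEdges]
    rw [Set.ncard_diff_singleton_of_mem ((SimpleGraph.mem_edgeSet _).mpr hxy)]
  have hpos : 0 < G.edgeSet.ncard :=
    Set.ncard_pos (G.edgeSet.toFinite) |>.mpr ⟨_, ((SimpleGraph.mem_edgeSet _).mpr hxy)⟩
  have h3 := conn_card_le_edges _ _ hcard hconn
  omega

lemma tree_ncard_edge [Fintype V] (hT : G.IsTree) :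
    G.edgeSet.ncard + 1 = Fintype.card V := by
  classical
  have := hT.card_edgeFinset
  rw [Set.ncard_eq_toFinset_card']
  simp only [edgeFinset] at this
  convert this using 2

/-- every edge of a tree is a bridge -/
lemma tree_not_reachable_deleteEdges (hT : G.IsTree) {x y : V} (hxy : G.Adj x y) :
    ¬ (G.deleteEdges {s(x, y)}).Reachable x y := by
  have := (isAcyclic_iff_forall_adj_isBridge.mp hT.IsAcyclic) hxy
  rw [isBridge_iff] at this
  exact this

lemma cross_unique (hT : G.IsTree) {u v w x : V}
    (p : G.Walk u v) (q : G.Walk w x)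
    (hdisj : ∀ a, a ∈ p.support → a ∉ q.support)
    {a1 b1 a2 b2 : V}
    (h1 : G.Adj a1 b1) (h2 : G.Adj a2 b2)
    (ha1 : a1 ∈ p.support) (hb1 : b1 ∈ q.support)
    (ha2 : a2 ∈ p.support) (hb2 : b2 ∈ q.support) :
    s(a1, b1) = s(a2, b2) := by
  by_contra hne
  have hbr := tree_not_reachable_deleteEdges hT h1
  have hpe : ∀ e ∈ p.edges, e ∉ ({s(a1, b1)} : Set (Sym2 V)) := by
    intro e he hmem
    rw [Set.mem_singleton_iff] at hmem
    subst hmem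
    exact hdisj b1 (Walk.snd_mem_support_of_mem_edges p he) hb1
  have hqe : ∀ e ∈ q.edges, e ∉ ({s(a1, b1)} : Set (Sym2 V)) := by
    intro e he hmem
    rw [Set.mem_singleton_iff] at hmem
    subst hmem
    exact hdisj a1 ha1 (Walk.fst_mem_support_of_mem_edges q he)
  set G' := G.deleteEdges {s(a1, b1)} with hG'
  have p' : G'.Walk u v := p.toDeleteEdges _ hpe
  have hps : p.support = (p.toDeleteEdges _ hpe).support := (Walk.support_transfer _ _).symm
  have hqs : q.support = (q.toDeleteEdges _ hqe).support := (Walk.support_transfer _ _).symm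
  have hra : G'.Reachable a1 a2 := by
    have r1 := reachable_of_mem_support (p.toDeleteEdges _ hpe) (hps ▸ ha1)
    have r2 := reachable_of_mem_support (p.toDeleteEdges _ hpe) (hps ▸ ha2)
    exact r1.symm.trans r2
  have hrb : G'.Reachable b2 b1 := by
    have r1 := reachable_of_mem_support (q.toDeleteEdges _ hqe) (hqs ▸ hb1)
    have r2 := reachable_of_mem_support (q.toDeleteEdges _ hqe) (hqs ▸ hb2)
    exact r2.symm.trans r1
  have hadj : G'.Adj a2 b2 := by
    rw [hG', deleteEdges_adj]
    refine ⟨h2, ?_⟩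
    rw [Set.mem_singleton_iff]
    exact fun hh => hne hh.symm
  exact hbr ((hra.trans hadj.reachable).trans hrb)

lemma path_interior_two_nbrs [DecidableEq V] {u v z : V} (p : G.Walk u v) (hp : p.IsPath)
    (hz : z ∈ p.support) (hu : z ≠ u) (hv : z ≠ v) :
    ∃ s t, s ≠ t ∧ G.Adj z s ∧ G.Adj z t ∧ s ∈ p.support ∧ t ∈ p.support := by
  have hspec := p.take_spec hz
  set q1 := p.takeUntil z hz with hq1
  set q2 := p.dropUntil z hz with hq2
  have hnodup : p.support.Nodup := hp.support_nodup
  have h1 : ¬ q1.reverse.Nil := Walk.not_nil_of_ne (Ne.symm (Ne.symm hu))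
  have h2 : ¬ q2.Nil := Walk.not_nil_of_ne hv
  obtain ⟨s, hs, r1, hr1⟩ := Walk.not_nil_iff.mp h1
  obtain ⟨t, ht, r2, hr2⟩ := Walk.not_nil_iff.mp h2
  have hsmem : s ∈ q1.support := by
    have : s ∈ q1.reverse.support := by rw [hr1]; simp
    rwa [Walk.support_reverse, List.mem_reverse] at this
  have htmem : t ∈ q2.support := by rw [hr2]; simp
  have hsne : s ≠ z := fun h => G.loopless.irrefl z (h ▸ hs)
  have htne : t ≠ z := fun h => G.loopless.irrefl z (h ▸ ht)
  refine ⟨s, t, ?_, hs, ht, ?_, ?_⟩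
  · intro hst
    subst hst
    have hsupp : p.support = q1.support ++ q2.support.tail := by
      rw [← hspec, Walk.support_append]
    rw [hsupp] at hnodup
    have := List.disjoint_of_nodup_append hnodup
    have htmem' : s ∈ q2.support.tail := by
      have : q2.support = z :: q2.support.tail := by
        rw [hr2]; simp
      rw [this] at htmem
      rcases List.mem_cons.mp htmem with h | h
      · exact absurd h hsne
      · exact h
    exact this hsmem htmem'
  · exact (Walk.support_takeUntil_subset p hz) hsmem
  · exact (Walk.support_dropUntil_subset p hz) htmem

lemma tree_no_triangle_s10 (hT : G.IsTree) {a b c : V} (hab : G.Adj a b) (hbc : G.Adj b c)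
    (hca : G.Adj c a) : False := by
  have hbr := tree_not_reachable_deleteEdges hT hab
  refine hbr ?_
  have h1 : (G.deleteEdges {s(a, b)}).Adj a c := by
    rw [deleteEdges_adj]
    refine ⟨hca.symm, ?_⟩
    intro hmem
    rw [Set.mem_singleton_iff, Sym2.eq_iff] at hmem
    rcases hmem with ⟨-, rfl⟩ | ⟨rfl, rfl⟩
    · exact G.loopless.irrefl _ hbc
    · exact G.loopless.irrefl _ hab
  have h2 : (G.deleteEdges {s(a, b)}).Adj c b := by
    rw [deleteEdges_adj]
    refine ⟨hbc.symm, ?_⟩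
    intro hmem
    rw [Set.mem_singleton_iff, Sym2.eq_iff] at hmem
    rcases hmem with ⟨rfl, -⟩ | ⟨rfl, rfl⟩
    · exact G.loopless.irrefl _ hca
    · exact G.loopless.irrefl _ hbc
  exact (h1.reachable).trans h2.reachable

lemma nat_card_ne {V : Type} [Finite V] (b : V) :
    Nat.card {y : V // y ≠ b} + 1 = Nat.card V := by
  classical
  have e : {y : V // y ≠ b} ≃ (({b}ᶜ : Set V) : Type) := Equiv.subtypeEquivRight (by simp)
  rw [Nat.card_congr e, Nat.card_coe_set_eq]
  rw [Set.compl_eq_univ_diff,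
    Set.ncard_diff_singleton_of_mem (Set.mem_univ b), Set.ncard_univ]
  have : Nonempty V := ⟨b⟩
  have h2 : 1 ≤ Nat.card V := Nat.card_pos
  omega

end Generic

namespace PhyloTree

variable {L : Type}

noncomputable instance fintypeV (T : PhyloTree L) : Fintype T.V :=
  @Fintype.ofFinite _ T.finV

lemma leaf_not_interior (T : PhyloTree L) (l : L) : ¬ T.IsInterior (T.leaf l) :=
  fun h => h ⟨l, rfl⟩

section Contract

variable (T : PhyloTree L) {a b : T.V}

open Classical in
noncomputable def cmap (hab : a ≠ b) (x : T.V) : {y : T.V // y ≠ b} :=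
  if h : x = b then ⟨a, hab⟩ else ⟨x, h⟩

lemma cmap_of_ne (hab : a ≠ b) {x : T.V} (hx : x ≠ b) : cmap T hab x = ⟨x, hx⟩ := by
  unfold cmap; exact dif_neg hx

lemma cmap_b (hab : a ≠ b) : cmap T hab b = ⟨a, hab⟩ := by
  unfold cmap; exact dif_pos rfl

lemma cmap_eq_iff (hab : a ≠ b) {x y : T.V} (h : cmap T hab x = cmap T hab y) :
    x = y ∨ (x = a ∧ y = b) ∨ (x = b ∧ y = a) := by
  unfold cmap at h
  split_ifs at h with h1 h2 h2
  · subst h1; subst h2; exact Or.inl rfl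
  · rw [Subtype.mk.injEq] at h; subst h1; exact Or.inr (Or.inr ⟨rfl, h.symm⟩)
  · rw [Subtype.mk.injEq] at h; subst h2; exact Or.inr (Or.inl ⟨h, rfl⟩)
  · rw [Subtype.mk.injEq] at h; exact Or.inl h

/-- the contracted graph -/
def cG (hab : a ≠ b) : SimpleGraph {y : T.V // y ≠ b} where
  Adj x y := x ≠ y ∧ ∃ x0 y0, T.G.Adj x0 y0 ∧ cmap T hab x0 = x ∧ cmap T hab y0 = y
  symm := by
    constructor
    rintro x y ⟨hne, x0, y0, hadj, hx, hy⟩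
    exact ⟨hne.symm, y0, x0, hadj.symm, hy, hx⟩
  loopless := ⟨fun x h => h.1 rfl⟩

variable (hab : T.G.Adj a b) (ia : T.IsInterior a) (ib : T.IsInterior b)

noncomputable def cmap_walk_adj {x0 y0 : T.V} (h : T.G.Adj x0 y0) :
    (cG T hab.ne).Walk (cmap T hab.ne x0) (cmap T hab.ne y0) := by
  by_cases he : cmap T hab.ne x0 = cmap T hab.ne y0
  · exact (SimpleGraph.Walk.nil).copy rfl he
  · exact SimpleGraph.Walk.cons (show (cG T hab.ne).Adj _ _ from ⟨he, x0, y0, h, rfl, rfl⟩) SimpleGraph.Walk.nil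

lemma cmap_walk_adj_support {x0 y0 : T.V} (h : T.G.Adj x0 y0) :
    ∀ z ∈ (cmap_walk_adj T hab h).support,
      z = cmap T hab.ne x0 ∨ z = cmap T hab.ne y0 := by
  intro z hz
  unfold cmap_walk_adj at hz
  split_ifs at hz with he
  · simp at hz; exact Or.inl hz
  · simp at hz; tauto

/-- walks transfer to the contraction -/
noncomputable def cWalk {u v : T.V} (p : T.G.Walk u v) :
    (cG T hab.ne).Walk (cmap T hab.ne u) (cmap T hab.ne v) :=
  expWalk (cmap T hab.ne) (fun _ _ h => cmap_walk_adj T hab h) p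

lemma cWalk_support {u v : T.V} (p : T.G.Walk u v) :
    ∀ z ∈ (cWalk T hab p).support, ∃ t ∈ p.support, cmap T hab.ne t = z := by
  intro z hz
  have := expWalk_support (cmap T hab.ne) (fun _ _ h => cmap_walk_adj T hab h)
    (cmap T hab.ne u) (fun a0 b0 h0 z0 hz0 => by
      rcases cmap_walk_adj_support T hab h0 z0 hz0 with h | h
      · exact Or.inl h
      · exact Or.inr (Or.inl h)) p z hz
  rcases this with h | h
  · exact h
  · exact ⟨u, p.start_mem_support, h.symm⟩

lemma leaf_ne_of_interior {x : T.V} (hx : T.IsInterior x) (l : L) : T.leaf l ≠ x :=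
  fun h => hx ⟨l, h⟩

lemma cmap_injOn_nbr {x : T.V} :
    Set.InjOn (cmap T hab.ne) (T.G.neighborSet x) := by
  intro t1 m1 t2 m2 he
  rcases cmap_eq_iff T hab.ne he with h | ⟨e1, e2⟩ | ⟨e1, e2⟩
  · exact h
  · exact (tree_no_triangle_s10 T.isTree hab
      (e2 ▸ (by exact m2 : T.G.Adj x t2)).symm
      (e1 ▸ (by exact m1 : T.G.Adj x t1))).elim
  · exact (tree_no_triangle_s10 T.isTree hab
      (e1 ▸ (by exact m1 : T.G.Adj x t1)).symm
      (e2 ▸ (by exact m2 : T.G.Adj x t2))).elim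

lemma cG_nbr_other {x : T.V} (hxa : x ≠ a) (hxb : x ≠ b) :
    (cG T hab.ne).neighborSet ⟨x, hxb⟩ = cmap T hab.ne '' (T.G.neighborSet x) := by
  ext y
  simp only [SimpleGraph.mem_neighborSet, Set.mem_image]
  constructor
  · rintro ⟨hne, x0, y0, hadj, hx0, hy0⟩
    have hx0' : x0 = x := by
      by_cases h : x0 = b
      · subst h; rw [cmap_b] at hx0
        exact absurd (congrArg Subtype.val hx0) (by simpa using fun h => hxa h.symm)
      · rw [cmap_of_ne T hab.ne h] at hx0
        exact congrArg Subtype.val hx0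
    subst hx0'
    exact ⟨y0, hadj, hy0⟩
  · rintro ⟨y0, hy0, rfl⟩
    refine ⟨?_, x, y0, hy0, cmap_of_ne T hab.ne hxb, rfl⟩
    intro h
    have h' : cmap T hab.ne x = cmap T hab.ne y0 := by
      rw [cmap_of_ne T hab.ne hxb]; exact h
    rcases cmap_eq_iff T hab.ne h' with h1 | ⟨h1, h2⟩ | ⟨h1, h2⟩
    · exact T.G.loopless.irrefl x (h1 ▸ hy0)
    · exact hxa h1
    · exact hxb h1
  
lemma cG_nbr_a :
    (cG T hab.ne).neighborSet ⟨a, hab.ne⟩ =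
      cmap T hab.ne '' ((T.G.neighborSet a ∪ T.G.neighborSet b) \ {a, b}) := by
  ext y
  simp only [SimpleGraph.mem_neighborSet, Set.mem_image]
  constructor
  · rintro ⟨hne, x0, y0, hadj, hx0, rfl⟩
    have hx0' : x0 = a ∨ x0 = b := by
      by_cases h : x0 = b
      · exact Or.inr h
      · rw [cmap_of_ne T hab.ne h] at hx0
        exact Or.inl (congrArg Subtype.val hx0)
    have hy0a : y0 ≠ a := by
      rintro rfl
      exact hne (by rw [cmap_of_ne T hab.ne hab.ne])
    have hy0b : y0 ≠ b := by
      rintro rfl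
      exact hne (by rw [cmap_b])
    refine ⟨y0, ⟨?_, ?_⟩, rfl⟩
    · rcases hx0' with rfl | rfl
      · exact Or.inl hadj
      · exact Or.inr hadj
    · simp [hy0a, hy0b]
  · rintro ⟨y0, ⟨hy0, hy0n⟩, rfl⟩
    simp only [Set.mem_insert_iff, Set.mem_singleton_iff, not_or] at hy0n
    obtain ⟨hy0a, hy0b⟩ := hy0n
    refine ⟨?_, ?_⟩
    · rw [cmap_of_ne T hab.ne hy0b]
      intro h
      exact hy0a (congrArg Subtype.val h).symm
    · rcases hy0 with h | h
      · exact ⟨a, y0, h, cmap_of_ne T hab.ne hab.ne, rfl⟩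
      · exact ⟨b, y0, h, cmap_b T hab.ne, rfl⟩

lemma nbrs_ab_split :
    (T.G.neighborSet a ∪ T.G.neighborSet b) \ ({a, b} : Set T.V) =
      (T.G.neighborSet a \ {b}) ∪ (T.G.neighborSet b \ {a}) := by
  ext t
  simp only [Set.mem_diff, Set.mem_union, Set.mem_insert_iff, Set.mem_singleton_iff,
    SimpleGraph.mem_neighborSet, not_or]
  constructor
  · rintro ⟨h | h, ha, hb⟩
    · exact Or.inl ⟨h, hb⟩
    · exact Or.inr ⟨h, ha⟩
  · rintro (⟨h, hb⟩ | ⟨h, ha⟩)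
    · exact ⟨Or.inl h, fun he => T.G.loopless.irrefl a (he ▸ h), hb⟩
    · exact ⟨Or.inr h, ha, fun he => T.G.loopless.irrefl b (he ▸ h)⟩

include hab ia ib in
lemma nbr_a_ncard :
    3 ≤ ((T.G.neighborSet a ∪ T.G.neighborSet b) \ ({a, b} : Set T.V)).ncard := by
  rw [nbrs_ab_split T]
  have hfin1 : (T.G.neighborSet a \ {b}).Finite := Set.toFinite _
  have hfin2 : (T.G.neighborSet b \ {a}).Finite := Set.toFinite _
  have hdisj : Disjoint (T.G.neighborSet a \ {b}) (T.G.neighborSet b \ {a}) := by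
    rw [Set.disjoint_left]
    rintro t ⟨h1, -⟩ ⟨h2, -⟩
    exact tree_no_triangle_s10 T.isTree hab (by exact h2) ((by exact h1 : T.G.Adj a t).symm)
  rw [Set.ncard_union_eq hdisj hfin1 hfin2]
  have h1 : 2 ≤ (T.G.neighborSet a \ {b}).ncard := by
    have := T.interior_deg a ia
    have hb : b ∈ T.G.neighborSet a := hab
    rw [Set.ncard_diff_singleton_of_mem hb]
    omega
  have h2 : 2 ≤ (T.G.neighborSet b \ {a}).ncard := by
    have := T.interior_deg b ib
    have ha : a ∈ T.G.neighborSet b := hab.symm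
    rw [Set.ncard_diff_singleton_of_mem ha]
    omega
  omega

lemma cG_connected : (cG T hab.ne).Connected := by
  have : Nonempty {y : T.V // y ≠ b} := ⟨⟨a, hab.ne⟩⟩
  refine SimpleGraph.Connected.mk ?_
  rintro ⟨x0, hx⟩ ⟨y0, hy⟩
  have w := (T.isTree.isConnected x0 y0).some
  have hr := (cWalk T hab w).reachable
  rwa [cmap_of_ne T hab.ne hx, cmap_of_ne T hab.ne hy] at hr

noncomputable instance : Fintype {y : T.V // y ≠ b} := Fintype.ofFinite _

lemma cG_edge_bound :
    (cG T hab.ne).edgeSet.ncard + 1 ≤ Fintype.card {y : T.V // y ≠ b} := by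
  classical
  have hsub : (cG T hab.ne).edgeSet ⊆
      Sym2.map (cmap T hab.ne) '' (T.G.edgeSet \ {s(a, b)}) := by
    intro e he
    induction e with
    | _ x y =>
      obtain ⟨hne, x0, y0, hadj, hx0, hy0⟩ := he
      refine ⟨s(x0, y0), ⟨hadj, ?_⟩, by rw [Sym2.map_pair_eq, hx0, hy0]⟩
      intro hmem
      rw [Set.mem_singleton_iff, Sym2.eq_iff] at hmem
      rcases hmem with ⟨rfl, rfl⟩ | ⟨rfl, rfl⟩
      · exact hne (by rw [← hx0, ← hy0, cmap_b, cmap_of_ne T hab.ne hab.ne])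
      · exact hne (by rw [← hx0, ← hy0, cmap_b, cmap_of_ne T hab.ne hab.ne])
  have h1 := Set.ncard_le_ncard hsub (Set.toFinite _)
  have h2 := Set.ncard_image_le (s := T.G.edgeSet \ {s(a, b)}) (f := Sym2.map (cmap T hab.ne)) (Set.toFinite _)
  have h3 : (T.G.edgeSet \ {s(a, b)}).ncard = T.G.edgeSet.ncard - 1 :=
    Set.ncard_diff_singleton_of_mem ((SimpleGraph.mem_edgeSet _).mpr hab)
  have h4 := tree_ncard_edge (G := T.G) T.isTree
  have h5 : Fintype.card {y : T.V // y ≠ b} + 1 = Fintype.card T.V := by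
    have := nat_card_ne (V := T.V) b
    rwa [Nat.card_eq_fintype_card, Nat.card_eq_fintype_card] at this
  have h6 : 1 ≤ T.G.edgeSet.ncard := by
    have : s(a,b) ∈ T.G.edgeSet := (SimpleGraph.mem_edgeSet _).mpr hab
    have := Set.ncard_pos (Set.toFinite _) |>.mpr ⟨_, this⟩
    omega
  have h7 : 2 ≤ Fintype.card T.V := by omega
  omega

/-- the contracted phylogenetic tree -/
noncomputable def contract : PhyloTree L where
  V := {y : T.V // y ≠ b}
  finV := inferInstance
  G := cG T hab.ne
  isTree := isTree_of_conn_card (cG_connected T hab) (cG_edge_bound T hab)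
  leaf l := cmap T hab.ne (T.leaf l)
  leaf_inj := by
    intro l1 l2 h
    dsimp only at h
    rw [cmap_of_ne T hab.ne (leaf_ne_of_interior T ib l1),
        cmap_of_ne T hab.ne (leaf_ne_of_interior T ib l2), Subtype.mk.injEq] at h
    exact T.leaf_inj h
  leaf_deg := by
    intro l
    rw [cmap_of_ne T hab.ne (leaf_ne_of_interior T ib l),
        cG_nbr_other T hab (leaf_ne_of_interior T ia l) (leaf_ne_of_interior T ib l),
        Set.ncard_image_of_injOn (cmap_injOn_nbr T hab)]
    exact T.leaf_deg l
  leaf_of_deg_one := by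
    rintro ⟨x, hx⟩ hdeg
    by_cases hxa : x = a
    · exfalso
      subst hxa
      rw [cG_nbr_a T hab,
        Set.ncard_image_of_injOn] at hdeg
      · have := nbr_a_ncard T hab ia ib
        omega
      · intro t1 h1 t2 h2 he
        rcases cmap_eq_iff T hab.ne he with h | ⟨rfl, rfl⟩ | ⟨rfl, rfl⟩
        · exact h
        · exact absurd h1.2 (by simp)
        · exact absurd h1.2 (by simp)
    · rw [cG_nbr_other T hab hxa hx,
        Set.ncard_image_of_injOn (cmap_injOn_nbr T hab)] at hdeg
      obtain ⟨l, hl⟩ := T.leaf_of_deg_one x hdeg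
      exact ⟨l, by subst hl; rw [cmap_of_ne T hab.ne hx]⟩
  interior_deg := by
    rintro ⟨x, hx⟩ hni
    by_cases hxa : x = a
    · subst hxa
      rw [cG_nbr_a T hab, Set.ncard_image_of_injOn]
      · exact nbr_a_ncard T hab ia ib
      · intro t1 h1 t2 h2 he
        rcases cmap_eq_iff T hab.ne he with h | ⟨rfl, rfl⟩ | ⟨rfl, rfl⟩
        · exact h
        · exact absurd h1.2 (by simp)
        · exact absurd h1.2 (by simp)
    · rw [cG_nbr_other T hab hxa hx,
        Set.ncard_image_of_injOn (cmap_injOn_nbr T hab)]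
      refine T.interior_deg x ?_
      rintro ⟨l, hl⟩
      exact hni ⟨l, by subst hl; rw [cmap_of_ne T hab.ne hx]⟩

lemma contract_card (b : T.V) :
    Nat.card {y : T.V // y ≠ b} + 1 = Nat.card T.V := by
  have : Finite T.V := T.finV
  exact nat_card_ne b

lemma contract_displays (Q : Set (Quartet L)) (hQ : T.DisplaysSet Q)
    (hnc : ∀ q ∈ Q, ∀ (p : T.G.Walk (T.leaf q.1) (T.leaf q.2.1))
      (r : T.G.Walk (T.leaf q.2.2.1) (T.leaf q.2.2.2)), p.IsPath → r.IsPath →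
      ¬((a ∈ p.support ∧ b ∈ r.support) ∨ (b ∈ p.support ∧ a ∈ r.support))) :
    (contract T hab ia ib).DisplaysSet Q := by
  letI : DecidableEq {y : T.V // y ≠ b} := Classical.decEq _
  letI : DecidableEq (contract T hab ia ib).V := Classical.decEq _
  intro q hq p'' r'' hp'' hr'' z hz1 hz2
  obtain ⟨P, hP, hPu⟩ := T.isTree.existsUnique_path (T.leaf q.1) (T.leaf q.2.1)
  obtain ⟨R, hR, hRu⟩ := T.isTree.existsUnique_path (T.leaf q.2.2.1) (T.leaf q.2.2.2)
  have hmP : p'' = (cWalk T hab P).bypass := by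
    obtain ⟨p0, hp0, hp0u⟩ := (contract T hab ia ib).isTree.existsUnique_path
      ((contract T hab ia ib).leaf q.1) ((contract T hab ia ib).leaf q.2.1)
    rw [hp0u p'' hp'', hp0u ((cWalk T hab P).bypass) (SimpleGraph.Walk.bypass_isPath _)]
  have hmR : r'' = (cWalk T hab R).bypass := by
    obtain ⟨p0, hp0, hp0u⟩ := (contract T hab ia ib).isTree.existsUnique_path
      ((contract T hab ia ib).leaf q.2.2.1) ((contract T hab ia ib).leaf q.2.2.2)
    rw [hp0u r'' hr'', hp0u ((cWalk T hab R).bypass) (SimpleGraph.Walk.bypass_isPath _)]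
  rw [hmP] at hz1
  rw [hmR] at hz2
  obtain ⟨t1, ht1, hc1⟩ := cWalk_support T hab P z (SimpleGraph.Walk.support_bypass_subset _ hz1)
  obtain ⟨t2, ht2, hc2⟩ := cWalk_support T hab R z (SimpleGraph.Walk.support_bypass_subset _ hz2)
  have hdisj := hQ q hq P R hP hR
  have hne : t1 ≠ t2 := fun h => hdisj t1 ht1 (h ▸ ht2)
  rcases cmap_eq_iff T hab.ne (hc1.trans hc2.symm) with h | ⟨rfl, rfl⟩ | ⟨rfl, rfl⟩
  · exact hne h
  · exact hnc q hq P R hP hR (Or.inl ⟨ht1, ht2⟩)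
  · exact hnc q hq P R hP hR (Or.inr ⟨ht1, ht2⟩)

end Contract

end PhyloTree

namespace PhyloTree

section Refine

variable {L : Type} (T : PhyloTree L) (v x0 y0 : T.V)

/-- adjacency for the refined graph -/
def rAdj (v x0 y0 : T.V) : (T.V ⊕ Unit) → (T.V ⊕ Unit) → Prop
  | Sum.inl p, Sum.inl q => T.G.Adj p q ∧ s(p, q) ≠ s(v, x0) ∧ s(p, q) ≠ s(v, y0)
  | Sum.inl p, Sum.inr _ => p = v ∨ p = x0 ∨ p = y0
  | Sum.inr _, Sum.inl q => q = v ∨ q = x0 ∨ q = y0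
  | Sum.inr _, Sum.inr _ => False

/-- the refined graph -/
def rG (v x0 y0 : T.V) : SimpleGraph (T.V ⊕ Unit) where
  Adj a b := rAdj T v x0 y0 a b
  symm := by
    constructor
    rintro (p | u) (q | u') h <;> simp only [rAdj] at h ⊢
    · exact ⟨h.1.symm, by rw [Sym2.eq_swap]; exact h.2.1, by rw [Sym2.eq_swap]; exact h.2.2⟩
    · exact h
    · exact h
  loopless := by
    constructor
    rintro (p | u) h <;> simp only [rAdj] at h
    exact T.G.loopless.irrefl p h.1

variable (hx : T.G.Adj v x0) (hy : T.G.Adj v y0) (hxy : x0 ≠ y0)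

lemma rG_adj_vw : (rG T v x0 y0).Adj (Sum.inl v) (Sum.inr ()) := Or.inl rfl
lemma rG_adj_wx : (rG T v x0 y0).Adj (Sum.inr ()) (Sum.inl x0) := Or.inr (Or.inl rfl)
lemma rG_adj_wy : (rG T v x0 y0).Adj (Sum.inr ()) (Sum.inl y0) := Or.inr (Or.inr rfl)

variable {v x0 y0}

open Classical in
/-- lift of a single edge -/
noncomputable def rWalk_adj (v x0 y0 : T.V) {p q : T.V} (h : T.G.Adj p q) :
    (rG T v x0 y0).Walk (Sum.inl p) (Sum.inl q) :=
  if h1 : p = v ∧ q = x0 then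
    ((SimpleGraph.Walk.cons (rG_adj_vw T v x0 y0) (SimpleGraph.Walk.cons (rG_adj_wx T v x0 y0)
      SimpleGraph.Walk.nil))).copy (by rw [h1.1]) (by rw [h1.2])
  else if h2 : p = x0 ∧ q = v then
    ((SimpleGraph.Walk.cons ((rG_adj_wx T v x0 y0).symm) (SimpleGraph.Walk.cons ((rG_adj_vw T v x0 y0).symm)
      SimpleGraph.Walk.nil))).copy (by rw [h2.1]) (by rw [h2.2])
  else if h3 : p = v ∧ q = y0 then
    ((SimpleGraph.Walk.cons (rG_adj_vw T v x0 y0) (SimpleGraph.Walk.cons (rG_adj_wy T v x0 y0)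
      SimpleGraph.Walk.nil))).copy (by rw [h3.1]) (by rw [h3.2])
  else if h4 : p = y0 ∧ q = v then
    ((SimpleGraph.Walk.cons ((rG_adj_wy T v x0 y0).symm) (SimpleGraph.Walk.cons ((rG_adj_vw T v x0 y0).symm)
      SimpleGraph.Walk.nil))).copy (by rw [h4.1]) (by rw [h4.2])
  else
    SimpleGraph.Walk.cons (show (rG T v x0 y0).Adj (Sum.inl p) (Sum.inl q) by
      refine ⟨h, ?_, ?_⟩
      · intro he
        rw [Sym2.eq_iff] at he
        rcases he with ⟨ha, hb⟩ | ⟨ha, hb⟩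
        · exact h1 ⟨ha, hb⟩
        · exact h2 ⟨ha, hb⟩
      · intro he
        rw [Sym2.eq_iff] at he
        rcases he with ⟨ha, hb⟩ | ⟨ha, hb⟩
        · exact h3 ⟨ha, hb⟩
        · exact h4 ⟨ha, hb⟩) SimpleGraph.Walk.nil

lemma rWalk_adj_support (v x0 y0 : T.V) {p q : T.V} (h : T.G.Adj p q) :
    ∀ z ∈ (rWalk_adj T v x0 y0 h).support,
      z = Sum.inl p ∨ z = Sum.inl q ∨ z = Sum.inr () := by
  intro z hz
  unfold rWalk_adj at hz
  split_ifs at hz with h1 h2 h3 h4 <;>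
    simp only [SimpleGraph.Walk.support_copy, SimpleGraph.Walk.support_cons,
      SimpleGraph.Walk.support_nil, List.mem_cons, List.mem_singleton] at hz <;>
    [ (obtain ⟨rfl, rfl⟩ := h1); (obtain ⟨rfl, rfl⟩ := h2); (obtain ⟨rfl, rfl⟩ := h3);
      (obtain ⟨rfl, rfl⟩ := h4); skip ] <;> tauto

/-- lifting walks to the refinement -/
noncomputable def rWalk (v x0 y0 : T.V) {a b : T.V} (p : T.G.Walk a b) :
    (rG T v x0 y0).Walk (Sum.inl a) (Sum.inl b) :=
  expWalk Sum.inl (fun _ _ h => rWalk_adj T v x0 y0 h) p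

lemma rWalk_support (v x0 y0 : T.V) {a b : T.V} (p : T.G.Walk a b) :
    ∀ z ∈ (rWalk T v x0 y0 p).support, (∃ t ∈ p.support, Sum.inl t = z) ∨ z = Sum.inr () := by
  intro z hz
  exact expWalk_support Sum.inl (fun _ _ h => rWalk_adj T v x0 y0 h) (Sum.inr ())
    (fun a0 b0 h0 => rWalk_adj_support T v x0 y0 h0) p z hz

lemma rG_connected : (rG T v x0 y0).Connected := by
  have : Nonempty (T.V ⊕ Unit) := ⟨Sum.inr ()⟩
  refine SimpleGraph.Connected.mk ?_
  have key : ∀ t : T.V, (rG T v x0 y0).Reachable (Sum.inl t) (Sum.inr ()) := by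
    intro t
    refine SimpleGraph.Reachable.trans ?_ (rG_adj_vw T v x0 y0).reachable
    exact (rWalk T v x0 y0 ((T.isTree.isConnected t v).some)).reachable
  rintro (t | u) (t' | u')
  · exact ((key t).trans (key t').symm)
  · exact key t
  · exact (key t').symm
  · rfl

include hx hy hxy in
lemma rG_edge_bound :
    (rG T v x0 y0).edgeSet.ncard ≤ T.G.edgeSet.ncard + 1 := by
  classical
  have hsub : (rG T v x0 y0).edgeSet ⊆
      (Sym2.map Sum.inl '' (T.G.edgeSet \ {s(v, x0), s(v, y0)})) ∪
        {s(Sum.inr (), Sum.inl v), s(Sum.inr (), Sum.inl x0), s(Sum.inr (), Sum.inl y0)} := by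
    intro e he
    induction e with
    | _ a b =>
      match a, b with
      | Sum.inl p, Sum.inl q =>
        obtain ⟨h, h1, h2⟩ := he
        refine Or.inl ⟨s(p, q), ⟨h, ?_⟩, by rw [Sym2.map_pair_eq]⟩
        simp only [Set.mem_insert_iff, Set.mem_singleton_iff]
        push_neg
        exact ⟨h1, h2⟩
      | Sum.inl p, Sum.inr u =>
        have he' : rAdj T v x0 y0 (Sum.inl p) (Sum.inr u) := he
        rcases he' with rfl | rfl | rfl <;>
          refine Or.inr ?_ <;> simp [Sym2.eq_swap]
      | Sum.inr u, Sum.inl q =>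
        have he' : rAdj T v x0 y0 (Sum.inr u) (Sum.inl q) := he
        rcases he' with rfl | rfl | rfl <;>
          refine Or.inr ?_ <;> simp
      | Sum.inr u, Sum.inr u' => exact absurd he (by simp [rG, rAdj])
  have h1 := Set.ncard_le_ncard hsub (Set.toFinite _)
  have h2 := Set.ncard_union_le
    (Sym2.map Sum.inl '' (T.G.edgeSet \ {s(v, x0), s(v, y0)}))
    ({s(Sum.inr (), Sum.inl v), s(Sum.inr (), Sum.inl x0), s(Sum.inr (), Sum.inl y0)} :
      Set (Sym2 (T.V ⊕ Unit)))
  have h3 := Set.ncard_image_le (s := T.G.edgeSet \ {s(v, x0), s(v, y0)})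
    (f := Sym2.map (Sum.inl : T.V → T.V ⊕ Unit)) (Set.toFinite _)
  have h4 : (T.G.edgeSet \ {s(v, x0), s(v, y0)}).ncard ≤ T.G.edgeSet.ncard - 2 := by
    have he1 : s(v, x0) ∈ T.G.edgeSet := (SimpleGraph.mem_edgeSet _).mpr hx
    have he2 : s(v, y0) ∈ T.G.edgeSet \ {s(v, x0)} := by
      refine ⟨(SimpleGraph.mem_edgeSet _).mpr hy, ?_⟩
      intro hmem
      rw [Set.mem_singleton_iff, Sym2.eq_iff] at hmem
      rcases hmem with ⟨-, h⟩ | ⟨h1, h2⟩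
      · exact hxy h.symm
      · exact T.G.loopless.irrefl v (h2 ▸ hy)
    have : T.G.edgeSet \ {s(v, x0), s(v, y0)} = (T.G.edgeSet \ {s(v, x0)}) \ {s(v, y0)} := by
      ext e; simp only [Set.mem_diff, Set.mem_insert_iff, Set.mem_singleton_iff]; tauto
    rw [this, Set.ncard_diff_singleton_of_mem he2,
      Set.ncard_diff_singleton_of_mem he1]
    omega
  have h5 : ({s(Sum.inr (), Sum.inl v), s(Sum.inr (), Sum.inl x0), s(Sum.inr (), Sum.inl y0)} :
      Set (Sym2 (T.V ⊕ Unit))).ncard ≤ 3 := by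
    refine le_trans (Set.ncard_insert_le _ _) ?_
    have := Set.ncard_insert_le (s(Sum.inr (), Sum.inl x0)) ({s(Sum.inr (), Sum.inl y0)} :
      Set (Sym2 (T.V ⊕ Unit)))
    simp only [Set.ncard_singleton] at this ⊢
    omega
  have h6 : 2 ≤ T.G.edgeSet.ncard := by
    have he1 : s(v, x0) ∈ T.G.edgeSet := (SimpleGraph.mem_edgeSet _).mpr hx
    have he2 : s(v, y0) ∈ T.G.edgeSet \ {s(v, x0)} := by
      refine ⟨(SimpleGraph.mem_edgeSet _).mpr hy, ?_⟩
      intro hmem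
      rw [Set.mem_singleton_iff, Sym2.eq_iff] at hmem
      rcases hmem with ⟨-, h⟩ | ⟨h1, h2⟩
      · exact hxy h.symm
      · exact T.G.loopless.irrefl v (h2 ▸ hy)
    have hs : {s(v, x0), s(v, y0)} ⊆ T.G.edgeSet := by
      rintro e (rfl | rfl)
      · exact he1
      · exact he2.1
    have := Set.ncard_le_ncard hs (Set.toFinite _)
    have hp : ({s(v, x0), s(v, y0)} : Set (Sym2 T.V)).ncard = 2 :=
      Set.ncard_pair (fun hh => he2.2 hh.symm)
    omega
  omega

lemma rG_nbr_w :
    (rG T v x0 y0).neighborSet (Sum.inr ()) =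
      {Sum.inl v, Sum.inl x0, Sum.inl y0} := by
  ext z
  simp only [SimpleGraph.mem_neighborSet, Set.mem_insert_iff, Set.mem_singleton_iff]
  constructor
  · intro h
    rcases z with t | u
    · have h' : rAdj T v x0 y0 (Sum.inr ()) (Sum.inl t) := h
      rcases h' with rfl | rfl | rfl
      · exact Or.inl rfl
      · exact Or.inr (Or.inl rfl)
      · exact Or.inr (Or.inr rfl)
    · exact absurd (h : rAdj T v x0 y0 (Sum.inr ()) (Sum.inr u)) (by simp [rAdj])
  · rintro (rfl | rfl | rfl)
    · exact (rG_adj_vw T v x0 y0).symm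
    · exact rG_adj_wx T v x0 y0
    · exact rG_adj_wy T v x0 y0

lemma sym2_ne_aux {p q r s : T.V} (hpr : p ≠ r) (hps : p ≠ s) :
    s(p, q) ≠ s(r, s) := by
  intro h
  rw [Sym2.eq_iff] at h
  rcases h with ⟨h1, -⟩ | ⟨h1, -⟩
  · exact hpr h1
  · exact hps h1

include hx hy in
lemma rG_nbr_v :
    (rG T v x0 y0).neighborSet (Sum.inl v) =
      Sum.inl '' (T.G.neighborSet v \ {x0, y0}) ∪ {Sum.inr ()} := by
  ext z
  rcases z with t | u
  · simp only [SimpleGraph.mem_neighborSet, Set.mem_union, Set.mem_image, Set.mem_diff,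
      Set.mem_insert_iff, Set.mem_singleton_iff, not_or]
    constructor
    · rintro ⟨h, h1, h2⟩
      refine Or.inl ⟨t, ⟨h, ?_, ?_⟩, rfl⟩
      · rintro rfl; exact h1 rfl
      · rintro rfl; exact h2 rfl
    · rintro (⟨t', ⟨h, h1, h2⟩, he⟩ | h)
      · rw [Sum.inl.injEq] at he
        subst he
        refine ⟨h, ?_, ?_⟩
        · intro hh
          rw [Sym2.eq_iff] at hh
          rcases hh with ⟨-, h3⟩ | ⟨h3, -⟩
          · exact h1 h3
          · exact T.G.loopless.irrefl v (h3 ▸ hx)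
        · intro hh
          rw [Sym2.eq_iff] at hh
          rcases hh with ⟨-, h3⟩ | ⟨h3, -⟩
          · exact h2 h3
          · exact T.G.loopless.irrefl v (h3 ▸ hy)
      · simp at h
  · cases u
    simp only [SimpleGraph.mem_neighborSet, Set.mem_union, Set.mem_image, Set.mem_singleton_iff]
    constructor
    · intro _; exact Or.inr trivial
    · intro _
      show rAdj T v x0 y0 (Sum.inl v) (Sum.inr ())
      exact Or.inl rfl

include hx hy hxy in
lemma rG_nbr_x0 :
    (rG T v x0 y0).neighborSet (Sum.inl x0) =
      Sum.inl '' (T.G.neighborSet x0 \ {v}) ∪ {Sum.inr ()} := by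
  have hvx : v ≠ x0 := hx.ne
  have hvy : v ≠ y0 := hy.ne
  ext z
  rcases z with t | u
  · simp only [SimpleGraph.mem_neighborSet, Set.mem_union, Set.mem_image, Set.mem_diff,
      Set.mem_singleton_iff]
    constructor
    · rintro ⟨h, h1, h2⟩
      refine Or.inl ⟨t, ⟨h, ?_⟩, rfl⟩
      rintro rfl
      exact h1 (by rw [Sym2.eq_swap])
    · rintro (⟨t', ⟨h, h1⟩, he⟩ | h)
      · rw [Sum.inl.injEq] at he
        subst he
        refine ⟨h, ?_, ?_⟩
        · intro hh
          rw [Sym2.eq_iff] at hh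
          rcases hh with ⟨h3, h4⟩ | ⟨h3, h4⟩
          · exact hvx h3.symm
          · exact h1 h4
        · intro hh
          rw [Sym2.eq_iff] at hh
          rcases hh with ⟨h3, -⟩ | ⟨h3, -⟩
          · exact hvx h3.symm
          · exact hxy h3
      · simp at h
  · cases u
    simp only [SimpleGraph.mem_neighborSet, Set.mem_union, Set.mem_image, Set.mem_singleton_iff]
    constructor
    · intro _; exact Or.inr trivial
    · intro _
      show rAdj T v x0 y0 (Sum.inl x0) (Sum.inr ())
      exact Or.inr (Or.inl rfl)

include hx hy hxy in
lemma rG_nbr_y0 :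
    (rG T v x0 y0).neighborSet (Sum.inl y0) =
      Sum.inl '' (T.G.neighborSet y0 \ {v}) ∪ {Sum.inr ()} := by
  have hvx : v ≠ x0 := hx.ne
  have hvy : v ≠ y0 := hy.ne
  ext z
  rcases z with t | u
  · simp only [SimpleGraph.mem_neighborSet, Set.mem_union, Set.mem_image, Set.mem_diff,
      Set.mem_singleton_iff]
    constructor
    · rintro ⟨h, h1, h2⟩
      refine Or.inl ⟨t, ⟨h, ?_⟩, rfl⟩
      rintro rfl
      exact h2 (by rw [Sym2.eq_swap])
    · rintro (⟨t', ⟨h, h1⟩, he⟩ | h)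
      · rw [Sum.inl.injEq] at he
        subst he
        refine ⟨h, ?_, ?_⟩
        · intro hh
          rw [Sym2.eq_iff] at hh
          rcases hh with ⟨h3, -⟩ | ⟨h3, -⟩
          · exact hvy h3.symm
          · exact hxy h3.symm
        · intro hh
          rw [Sym2.eq_iff] at hh
          rcases hh with ⟨h3, h4⟩ | ⟨h3, h4⟩
          · exact hvy h3.symm
          · exact h1 h4
      · simp at h
  · cases u
    simp only [SimpleGraph.mem_neighborSet, Set.mem_union, Set.mem_image, Set.mem_singleton_iff]
    constructor
    · intro _; exact Or.inr trivial
    · intro _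
      show rAdj T v x0 y0 (Sum.inl y0) (Sum.inr ())
      exact Or.inr (Or.inr rfl)

lemma rG_nbr_other {t : T.V} (htv : t ≠ v) (htx : t ≠ x0) (hty : t ≠ y0) :
    (rG T v x0 y0).neighborSet (Sum.inl t) = Sum.inl '' (T.G.neighborSet t) := by
  ext z
  rcases z with t' | u
  · simp only [SimpleGraph.mem_neighborSet, Set.mem_image]
    constructor
    · rintro ⟨h, -, -⟩
      exact ⟨t', h, rfl⟩
    · rintro ⟨t'', h, he⟩
      rw [Sum.inl.injEq] at he
      subst he
      exact ⟨h, sym2_ne_aux T htv htx, sym2_ne_aux T htv hty⟩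
  · cases u
    simp only [SimpleGraph.mem_neighborSet, Set.mem_image]
    constructor
    · intro h
      have h' : rAdj T v x0 y0 (Sum.inl t) (Sum.inr PUnit.unit) := h
      rcases h' with rfl | rfl | rfl
      · exact absurd rfl htv
      · exact absurd rfl htx
      · exact absurd rfl hty
    · rintro ⟨t'', -, he⟩
      exact absurd he (by simp)

lemma ncard_inl_image (S : Set T.V) :
    ((Sum.inl '' S : Set (T.V ⊕ Unit))).ncard = S.ncard :=
  Set.ncard_image_of_injective S Sum.inl_injective

lemma ncard_inl_union_w (S : Set T.V) :
    ((Sum.inl '' S ∪ {Sum.inr ()}) : Set (T.V ⊕ Unit)).ncard = S.ncard + 1 := by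
  rw [Set.ncard_union_eq ?_ (Set.toFinite _) (Set.toFinite _), ncard_inl_image,
    Set.ncard_singleton]
  rw [Set.disjoint_singleton_right]
  rintro ⟨t, -, h⟩
  exact absurd h (by simp)

variable (iv : T.IsInterior v) (hdeg : 4 ≤ (T.G.neighborSet v).ncard)

include hx hy hxy in
lemma deg_inl_ne_v {t : T.V} (ht : t ≠ v) :
    ((rG T v x0 y0).neighborSet (Sum.inl t)).ncard = (T.G.neighborSet t).ncard := by
  by_cases htx : t = x0
  · subst htx
    rw [rG_nbr_x0 T hx hy hxy, ncard_inl_union_w,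
      Set.ncard_diff_singleton_of_mem (by exact hx.symm)]
    have : 1 ≤ (T.G.neighborSet t).ncard :=
      Set.ncard_pos (Set.toFinite _) |>.mpr ⟨v, hx.symm⟩
    omega
  · by_cases hty : t = y0
    · subst hty
      rw [rG_nbr_y0 T hx hy hxy, ncard_inl_union_w,
        Set.ncard_diff_singleton_of_mem (by exact hy.symm)]
      have : 1 ≤ (T.G.neighborSet t).ncard :=
        Set.ncard_pos (Set.toFinite _) |>.mpr ⟨v, hy.symm⟩
      omega
    · rw [rG_nbr_other T ht htx hty, ncard_inl_image]

include hx hy hxy hdeg in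
lemma deg_inl_v :
    3 ≤ ((rG T v x0 y0).neighborSet (Sum.inl v)).ncard := by
  rw [rG_nbr_v T hx hy, ncard_inl_union_w]
  have hsplit : T.G.neighborSet v \ {x0, y0} = (T.G.neighborSet v \ {x0}) \ {y0} := by
    ext e; simp only [Set.mem_diff, Set.mem_insert_iff, Set.mem_singleton_iff]; tauto
  have hy' : y0 ∈ T.G.neighborSet v \ {x0} := ⟨hy, by simpa using fun h => hxy h.symm⟩
  rw [hsplit, Set.ncard_diff_singleton_of_mem hy',
    Set.ncard_diff_singleton_of_mem (by exact hx)]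
  omega

include hx hy hxy in
lemma deg_w : ((rG T v x0 y0).neighborSet (Sum.inr ())).ncard = 3 := by
  rw [rG_nbr_w]
  rw [Set.ncard_insert_of_notMem ?h1 (Set.toFinite _), Set.ncard_insert_of_notMem ?h2
    (Set.toFinite _), Set.ncard_singleton]
  case h1 =>
    simp only [Set.mem_insert_iff, Set.mem_singleton_iff, Sum.inl.injEq]
    push_neg
    exact ⟨hx.ne, hy.ne⟩
  case h2 =>
    simp only [Set.mem_singleton_iff, Sum.inl.injEq]
    exact hxy

/-- the refined phylogenetic tree: splits `v` into `v` and a new vertex -/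
noncomputable def refineT : PhyloTree L where
  V := T.V ⊕ Unit
  finV := inferInstance
  G := rG T v x0 y0
  isTree := by
    refine isTree_of_conn_card (rG_connected T) ?_
    have h1 := rG_edge_bound T hx hy hxy
    have h2 := tree_ncard_edge (G := T.G) T.isTree
    have h3 : Fintype.card (T.V ⊕ Unit) = Fintype.card T.V + 1 := by
      rw [Fintype.card_sum, Fintype.card_unit]
    omega
  leaf l := Sum.inl (T.leaf l)
  leaf_inj := fun l1 l2 h => T.leaf_inj (Sum.inl_injective h)
  leaf_deg := by
    intro l
    rw [deg_inl_ne_v T hx hy hxy (fun h => iv ⟨l, h⟩)]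
    exact T.leaf_deg l
  leaf_of_deg_one := by
    rintro (t | u) hdeg1
    · by_cases htv : t = v
      · exfalso
        rw [htv] at hdeg1
        have h2 := deg_inl_v T hx hy hxy hdeg
        have h1 : ((rG T v x0 y0).neighborSet (Sum.inl v)).ncard = 1 := hdeg1
        omega
      · rw [deg_inl_ne_v T hx hy hxy htv] at hdeg1
        obtain ⟨l, hl⟩ := T.leaf_of_deg_one t hdeg1
        exact ⟨l, by rw [hl]⟩
    · cases u
      exfalso
      have h2 := deg_w T hx hy hxy
      have h1 : ((rG T v x0 y0).neighborSet (Sum.inr ())).ncard = 1 := hdeg1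
      omega
  interior_deg := by
    rintro (t | u) hni
    · by_cases htv : t = v
      · rw [htv]
        exact deg_inl_v T hx hy hxy hdeg
      · rw [deg_inl_ne_v T hx hy hxy htv]
        refine T.interior_deg t ?_
        rintro ⟨l, hl⟩
        exact hni ⟨l, by rw [hl]⟩
    · cases u
      show 3 ≤ ((rG T v x0 y0).neighborSet (Sum.inr ())).ncard
      rw [deg_w T hx hy hxy]

lemma refine_card :
    Nat.card (T.V ⊕ Unit) = Nat.card T.V + 1 := by
  have : Finite T.V := T.finV
  rw [Nat.card_sum]
  simp

include iv hdeg in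
lemma refine_displays (Q : Set (Quartet L)) (hQ : T.DisplaysSet Q) :
    (refineT T hx hy hxy iv hdeg).DisplaysSet Q := by
  letI : DecidableEq (T.V ⊕ Unit) := Classical.decEq _
  letI : DecidableEq (refineT T hx hy hxy iv hdeg).V := Classical.decEq _
  intro q hq p' r' hp' hr' z hz1 hz2
  obtain ⟨P, hP, hPu⟩ := T.isTree.existsUnique_path (T.leaf q.1) (T.leaf q.2.1)
  obtain ⟨R, hR, hRu⟩ := T.isTree.existsUnique_path (T.leaf q.2.2.1) (T.leaf q.2.2.2)
  have hdisj := hQ q hq P R hP hR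
  have hmP : p' = (rWalk T v x0 y0 P).bypass := by
    obtain ⟨p0, hp0, hp0u⟩ := (refineT T hx hy hxy iv hdeg).isTree.existsUnique_path
      ((refineT T hx hy hxy iv hdeg).leaf q.1) ((refineT T hx hy hxy iv hdeg).leaf q.2.1)
    rw [hp0u p' hp', hp0u ((rWalk T v x0 y0 P).bypass) (SimpleGraph.Walk.bypass_isPath _)]
  have hmR : r' = (rWalk T v x0 y0 R).bypass := by
    obtain ⟨p0, hp0, hp0u⟩ := (refineT T hx hy hxy iv hdeg).isTree.existsUnique_path
      ((refineT T hx hy hxy iv hdeg).leaf q.2.2.1) ((refineT T hx hy hxy iv hdeg).leaf q.2.2.2)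
    rw [hp0u r' hr', hp0u ((rWalk T v x0 y0 R).bypass) (SimpleGraph.Walk.bypass_isPath _)]
  -- support inclusion
  have hPsub : ∀ z' ∈ p'.support, (∃ t ∈ P.support, Sum.inl t = z') ∨ z' = Sum.inr () := by
    intro z' hz'
    rw [hmP] at hz'
    exact rWalk_support T v x0 y0 P z' (SimpleGraph.Walk.support_bypass_subset _ hz')
  have hRsub : ∀ z' ∈ r'.support, (∃ t ∈ R.support, Sum.inl t = z') ∨ z' = Sum.inr () := by
    intro z' hz'
    rw [hmR] at hz'
    exact rWalk_support T v x0 y0 R z' (SimpleGraph.Walk.support_bypass_subset _ hz')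
  have common : ∀ z' : T.V ⊕ Unit, z' ∈ p'.support → z' ∈ r'.support →
      z' ≠ Sum.inr () → False := by
    intro z' hz1' hz2' hne
    rcases hPsub z' hz1' with ⟨t1, ht1, he1⟩ | h
    · rcases hRsub z' hz2' with ⟨t2, ht2, he2⟩ | h
      · have : t1 = t2 := Sum.inl_injective (he1.trans he2.symm)
        subst this
        exact hdisj t1 ht1 ht2
      · exact hne h
    · exact hne h
  by_cases hzw : z = Sum.inr ()
  · subst hzw
    -- both paths pass through the new vertex w; find a common neighbor
    have hne1 : (Sum.inr () : T.V ⊕ Unit) ≠ Sum.inl (T.leaf q.1) := by simp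
    have hne2 : (Sum.inr () : T.V ⊕ Unit) ≠ Sum.inl (T.leaf q.2.1) := by simp
    have hne3 : (Sum.inr () : T.V ⊕ Unit) ≠ Sum.inl (T.leaf q.2.2.1) := by simp
    have hne4 : (Sum.inr () : T.V ⊕ Unit) ≠ Sum.inl (T.leaf q.2.2.2) := by simp
    obtain ⟨s1, t1, hst1, hadj1, hadj1', hs1, ht1⟩ :=
      path_interior_two_nbrs p' hp' hz1 hne1 hne2
    obtain ⟨s2, t2, hst2, hadj2, hadj2', hs2, ht2⟩ :=
      path_interior_two_nbrs r' hr' hz2 hne3 hne4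
    have hmem : ∀ s : T.V ⊕ Unit, (rG T v x0 y0).Adj (Sum.inr ()) s →
        s = Sum.inl v ∨ s = Sum.inl x0 ∨ s = Sum.inl y0 := by
      intro s hs
      have : s ∈ (rG T v x0 y0).neighborSet (Sum.inr ()) := hs
      rw [rG_nbr_w] at this
      simpa using this
    have h1 := hmem s1 hadj1
    have h2 := hmem t1 hadj1'
    have h3 := hmem s2 hadj2
    have h4 := hmem t2 hadj2'
    -- a common element of {s1,t1} and {s2,t2} exists
    have : ∃ c, (c = s1 ∨ c = t1) ∧ (c = s2 ∨ c = t2) := by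
      rcases h1 with rfl | rfl | rfl <;> rcases h2 with rfl | rfl | rfl <;>
        rcases h3 with rfl | rfl | rfl <;> rcases h4 with rfl | rfl | rfl <;>
        first
          | exact absurd rfl hst1
          | exact absurd rfl hst2
          | exact ⟨_, Or.inl rfl, Or.inl rfl⟩
          | exact ⟨_, Or.inl rfl, Or.inr rfl⟩
          | exact ⟨_, Or.inr rfl, Or.inl rfl⟩
          | exact ⟨_, Or.inr rfl, Or.inr rfl⟩
    obtain ⟨c, hc1, hc2⟩ := this
    have hcp : c ∈ p'.support := by rcases hc1 with rfl | rfl <;> assumption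
    have hcr : c ∈ r'.support := by rcases hc2 with rfl | rfl <;> assumption
    have hcw : c ≠ Sum.inr () := by
      have : c = s1 ∨ c = t1 := hc1
      rcases this with rfl | rfl
      · rcases h1 with rfl | rfl | rfl <;> exact Sum.inl_ne_inr
      · rcases h2 with rfl | rfl | rfl <;> exact Sum.inl_ne_inr
    exact common c hcp hcr hcw
  · exact common z hz1 hz2 hzw

end Refine

end PhyloTree

namespace PhyloTree

section Count

variable {L : Type} [Fintype L] (T : PhyloTree L)

lemma no_leaf_adj (hL : 3 ≤ Fintype.card L) {l l' : L} (hne : l ≠ l')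
    (h : T.G.Adj (T.leaf l) (T.leaf l')) : False := by
  classical
  -- a third label exists
  obtain ⟨l3, hl3⟩ : ∃ l3 : L, l3 ∉ ({l, l'} : Finset L) := by
    by_contra hc
    push_neg at hc
    have hsub : (Finset.univ : Finset L) ⊆ {l, l'} := fun x _ => hc x
    have := Finset.card_le_card hsub
    have h2 : ({l, l'} : Finset L).card ≤ 2 := Finset.card_insert_le _ _ |>.trans (by simp)
    rw [Finset.card_univ] at this
    omega
  simp only [Finset.mem_insert, Finset.mem_singleton, not_or] at hl3
  obtain ⟨hl3l, hl3l'⟩ := hl3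
  -- unique neighbors
  obtain ⟨x, hx⟩ := Set.ncard_eq_one.mp (T.leaf_deg l)
  obtain ⟨x', hx'⟩ := Set.ncard_eq_one.mp (T.leaf_deg l')
  have hxl' : x = T.leaf l' := by
    have : T.leaf l' ∈ T.G.neighborSet (T.leaf l) := h
    rw [hx] at this
    exact (Set.mem_singleton_iff.mp this).symm
  have hx'l : x' = T.leaf l := by
    have : T.leaf l ∈ T.G.neighborSet (T.leaf l') := h.symm
    rw [hx'] at this
    exact (Set.mem_singleton_iff.mp this).symm
  -- path from leaf l to leaf l3
  obtain ⟨r, hr, -⟩ := T.isTree.existsUnique_path (T.leaf l) (T.leaf l3)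
  have hrnil : ¬ r.Nil := SimpleGraph.Walk.not_nil_of_ne
    (fun hh => hl3l (T.leaf_inj hh).symm)
  obtain ⟨s1, hadj1, r1, rfl⟩ := SimpleGraph.Walk.not_nil_iff.mp hrnil
  have hs1 : s1 = T.leaf l' := by
    have : s1 ∈ T.G.neighborSet (T.leaf l) := hadj1
    rw [hx] at this
    rw [Set.mem_singleton_iff.mp this, hxl']
  subst hs1
  have hr1nil : ¬ r1.Nil := SimpleGraph.Walk.not_nil_of_ne
    (fun hh => hl3l' (T.leaf_inj hh).symm)
  obtain ⟨s2, hadj2, r2, rfl⟩ := SimpleGraph.Walk.not_nil_iff.mp hr1nil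
  have hs2 : s2 = T.leaf l := by
    have : s2 ∈ T.G.neighborSet (T.leaf l') := hadj2
    rw [hx'] at this
    rw [Set.mem_singleton_iff.mp this, hx'l]
  rw [SimpleGraph.Walk.cons_isPath_iff] at hr
  refine hr.2 ?_
  rw [SimpleGraph.Walk.support_cons]
  exact List.mem_cons_of_mem _ (hs2 ▸ r2.start_mem_support)

open Classical in
/-- the unique neighbor of a leaf -/
noncomputable def nbr (l : L) : T.V :=
  (Set.ncard_eq_one.mp (T.leaf_deg l)).choose

lemma nbr_spec (l : L) : T.G.neighborSet (T.leaf l) = {T.nbr l} :=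
  (Set.ncard_eq_one.mp (T.leaf_deg l)).choose_spec

lemma nbr_adj (l : L) : T.G.Adj (T.leaf l) (T.nbr l) := by
  have : T.nbr l ∈ T.G.neighborSet (T.leaf l) := by rw [nbr_spec]; rfl
  exact this

lemma card_V (hL : 3 ≤ Fintype.card L) :
    Fintype.card T.V = Fintype.card L + {v : T.V | T.IsInterior v}.ncard := by
  classical
  have hcompl : {v : T.V | T.IsInterior v} = (Set.range T.leaf)ᶜ := by
    ext v
    simp only [Set.mem_setOf_eq, Set.mem_compl_iff, Set.mem_range, IsInterior]
  have hrange : (Set.range T.leaf).ncard = Fintype.card L := by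
    rw [← Set.image_univ, Set.ncard_image_of_injective _ T.leaf_inj, Set.ncard_univ,
      Nat.card_eq_fintype_card]
  have := Set.ncard_add_ncard_compl (Set.range T.leaf) (Set.toFinite _) (Set.toFinite _)
  rw [hrange, Nat.card_eq_fintype_card] at this
  rw [hcompl]
  omega

lemma interior_count (hbin : T.Binary) (hL : 3 ≤ Fintype.card L) :
    {v : T.V | T.IsInterior v}.ncard = Fintype.card L - 2 := by
  classical
  have hV := card_V T hL
  have hE := tree_ncard_edge (G := T.G) T.isTree
  -- degree sum
  have hdegsum : ∑ v : T.V, (T.G.neighborSet v).ncard = 2 * T.G.edgeSet.ncard := by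
    have h1 := SimpleGraph.sum_degrees_eq_twice_card_edges T.G
    have h2 : ∀ v : T.V, T.G.degree v = (T.G.neighborSet v).ncard := by
      intro v
      rw [← SimpleGraph.card_neighborSet_eq_degree, Set.ncard_eq_toFinset_card']
      exact (Set.toFinset_card _).symm
    have h3 : T.G.edgeFinset.card = T.G.edgeSet.ncard := by
      rw [← SimpleGraph.coe_edgeFinset, Set.ncard_coe_finset]
    rw [← h3]
    rw [← h1]
    exact Finset.sum_congr rfl (fun v _ => (h2 v).symm)
  -- split the sum
  have hsplit : ∑ v : T.V, (T.G.neighborSet v).ncard =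
      ∑ v ∈ Finset.univ.filter (fun v => ∃ l, T.leaf l = v), (T.G.neighborSet v).ncard +
      ∑ v ∈ Finset.univ.filter (fun v => ¬ ∃ l, T.leaf l = v), (T.G.neighborSet v).ncard :=
    (Finset.sum_filter_add_sum_filter_not _ _ _).symm
  have hleafsum : ∑ v ∈ Finset.univ.filter (fun v => ∃ l, T.leaf l = v),
      (T.G.neighborSet v).ncard = Fintype.card L := by
    have h1 : ∀ v ∈ Finset.univ.filter (fun v => ∃ l, T.leaf l = v),
        (T.G.neighborSet v).ncard = 1 := by
      intro v hv
      obtain ⟨l, rfl⟩ := (Finset.mem_filter.mp hv).2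
      exact T.leaf_deg l
    rw [Finset.sum_congr rfl h1, Finset.sum_const, smul_eq_mul, mul_one]
    have h2 : Finset.univ.filter (fun v => ∃ l, T.leaf l = v) =
        (Set.range T.leaf).toFinset := by
      ext v; simp [Set.mem_range]
    rw [h2, ← Set.ncard_eq_toFinset_card', ← Set.image_univ,
      Set.ncard_image_of_injective _ T.leaf_inj, Set.ncard_univ, Nat.card_eq_fintype_card]
  have hintsum : ∑ v ∈ Finset.univ.filter (fun v => ¬ ∃ l, T.leaf l = v),
      (T.G.neighborSet v).ncard = 3 * {v : T.V | T.IsInterior v}.ncard := by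
    have h1 : ∀ v ∈ Finset.univ.filter (fun v => ¬ ∃ l, T.leaf l = v),
        (T.G.neighborSet v).ncard = 3 := by
      intro v hv
      exact hbin v ((Finset.mem_filter.mp hv).2)
    rw [Finset.sum_congr rfl h1, Finset.sum_const, smul_eq_mul]
    have h2 : Finset.univ.filter (fun v => ¬ ∃ l, T.leaf l = v) =
        ({v : T.V | T.IsInterior v}).toFinset := by
      ext v
      simp [IsInterior]
    rw [h2, ← Set.ncard_eq_toFinset_card']
    exact mul_comm _ _
  rw [hsplit, hleafsum, hintsum] at hdegsum
  omega

lemma pendant_edges (hL : 3 ≤ Fintype.card L) :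
    {e : Sym2 T.V | e ∈ T.G.edgeSet ∧ ¬ ∀ v ∈ e, T.IsInterior v} =
      Set.range (fun l => s(T.leaf l, T.nbr l)) := by
  classical
  ext e
  simp only [Set.mem_setOf_eq, Set.mem_range]
  constructor
  · rintro ⟨he, hni⟩
    push_neg at hni
    obtain ⟨v, hv, hvni⟩ := hni
    rw [IsInterior, not_not] at hvni
    obtain ⟨l, rfl⟩ := hvni
    induction e with
    | _ p q =>
      rcases Sym2.mem_iff.mp hv with rfl | rfl
      · have : q ∈ T.G.neighborSet (T.leaf l) := he
        rw [nbr_spec] at this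
        rw [Set.mem_singleton_iff.mp this]
        exact ⟨l, rfl⟩
      · have : p ∈ T.G.neighborSet (T.leaf l) := ((SimpleGraph.mem_edgeSet _).mp he).symm
        rw [nbr_spec] at this
        rw [Set.mem_singleton_iff.mp this]
        exact ⟨l, Sym2.eq_swap⟩
  · rintro ⟨l, rfl⟩
    refine ⟨(SimpleGraph.mem_edgeSet _).mpr (nbr_adj T l), ?_⟩
    intro hall
    exact hall (T.leaf l) (Sym2.mem_mk_left _ _) ⟨l, rfl⟩

lemma interior_edge_count (hbin : T.Binary) (hL : 3 ≤ Fintype.card L) :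
    {e : Sym2 T.V | T.InteriorEdge e}.ncard = Fintype.card L - 3 := by
  classical
  have hI := interior_count T hbin hL
  have hV := card_V T hL
  have hE := tree_ncard_edge (G := T.G) T.isTree
  -- pendant edge count
  have hpcard : ({e : Sym2 T.V | e ∈ T.G.edgeSet ∧ ¬ ∀ v ∈ e, T.IsInterior v}).ncard =
      Fintype.card L := by
    have hinj : Set.InjOn (fun l => s(T.leaf l, T.nbr l)) Set.univ := by
      intro l1 _ l2 _ he
      dsimp only at he
      rw [Sym2.eq_iff] at he
      rcases he with ⟨h1, -⟩ | ⟨h1, h2⟩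
      · exact T.leaf_inj h1
      · by_contra hne
        exact no_leaf_adj T hL hne (h2 ▸ nbr_adj T l1)
    rw [pendant_edges T hL, ← Set.image_univ, Set.ncard_image_of_injOn hinj, Set.ncard_univ,
      Nat.card_eq_fintype_card]
  -- partition
  have hpart : T.G.edgeSet = {e : Sym2 T.V | T.InteriorEdge e} ∪
      {e : Sym2 T.V | e ∈ T.G.edgeSet ∧ ¬ ∀ v ∈ e, T.IsInterior v} := by
    ext e
    simp only [Set.mem_union, Set.mem_setOf_eq, InteriorEdge]
    constructor
    · intro he
      by_cases h : ∀ v ∈ e, T.IsInterior v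
      · exact Or.inl ⟨he, h⟩
      · exact Or.inr ⟨he, h⟩
    · rintro (⟨he, -⟩ | ⟨he, -⟩) <;> exact he
  have hdisj : Disjoint {e : Sym2 T.V | T.InteriorEdge e}
      {e : Sym2 T.V | e ∈ T.G.edgeSet ∧ ¬ ∀ v ∈ e, T.IsInterior v} := by
    rw [Set.disjoint_left]
    rintro e ⟨-, h⟩ ⟨-, h'⟩
    exact h' h
  have := Set.ncard_union_eq hdisj (Set.toFinite _) (Set.toFinite _)
  rw [← hpart, hpcard] at this
  omega

end Count

end PhyloTree

/-- Every definitive quartet set on leaf set `{1,…,n}` (`n ≥ 4`) contains at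
least `n - 3` quartets. -/
theorem stmt10 {n : ℕ} (hn : 4 ≤ n) (Q : Finset (PhyloTree.Quartet (Fin n)))
    (hcov : ∀ l : Fin n, ∃ q ∈ Q, l ∈ PhyloTree.qLeaves q)
    (hdef : ∃ T : PhyloTree (Fin n), PhyloTree.Defines (↑Q) T) :
    n - 3 ≤ Q.card := by
  classical
  open PhyloTree in
  obtain ⟨T, hdisp, huniq⟩ := hdef
  letI : Fintype T.V := T.fintypeV
  have hL : Fintype.card (Fin n) = n := Fintype.card_fin n
  -- Step 1 : T is binary
  have hbin : T.Binary := by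
    by_contra hnb
    rw [PhyloTree.Binary] at hnb
    push_neg at hnb
    obtain ⟨v, hint, hne3⟩ := hnb
    have hge3 := T.interior_deg v hint
    have hdeg : 4 ≤ (T.G.neighborSet v).ncard := by omega
    obtain ⟨x0, y0, hx0m, hy0m, hxy0⟩ :=
      (Set.one_lt_ncard_iff (Set.toFinite _)).mp (by omega : 1 < (T.G.neighborSet v).ncard)
    have hx : T.G.Adj v x0 := hx0m
    have hy : T.G.Adj v y0 := hy0m
    have hdispR := PhyloTree.refine_displays T hx hy hxy0 hint hdeg (↑Q) hdisp
    obtain ⟨φ, -, -⟩ := huniq _ hdispR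
    have h1 : Nat.card (T.V ⊕ Unit) = Nat.card T.V := Nat.card_congr φ
    have h2 := PhyloTree.refine_card T
    omega
  -- chosen paths between leaves
  let P : ∀ l l' : Fin n, T.G.Walk (T.leaf l) (T.leaf l') :=
    fun l l' => (T.isTree.existsUnique_path (T.leaf l) (T.leaf l')).choose
  have hP : ∀ l l', (P l l').IsPath :=
    fun l l' => (T.isTree.existsUnique_path (T.leaf l) (T.leaf l')).choose_spec.1
  have hPuniq : ∀ l l' (p : T.G.Walk (T.leaf l) (T.leaf l')), p.IsPath → p = P l l' :=
    fun l l' p hp => (T.isTree.existsUnique_path (T.leaf l) (T.leaf l')).choose_spec.2 p hp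
  -- Step 2 : every interior edge is crossed by some quartet
  have hcross : ∀ a b : T.V, T.G.Adj a b → T.IsInterior a → T.IsInterior b →
      ∃ q ∈ Q, (a ∈ (P q.1 q.2.1).support ∧ b ∈ (P q.2.2.1 q.2.2.2).support) ∨
        (b ∈ (P q.1 q.2.1).support ∧ a ∈ (P q.2.2.1 q.2.2.2).support) := by
    intro a b hab ia ib
    by_contra hnc
    have hnc' : ∀ q ∈ (↑Q : Set (PhyloTree.Quartet (Fin n))),
        ∀ (p : T.G.Walk (T.leaf q.1) (T.leaf q.2.1))
          (r : T.G.Walk (T.leaf q.2.2.1) (T.leaf q.2.2.2)), p.IsPath → r.IsPath →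
          ¬((a ∈ p.support ∧ b ∈ r.support) ∨ (b ∈ p.support ∧ a ∈ r.support)) := by
      intro q hq p r hp hr hor
      refine hnc ⟨q, Finset.mem_coe.mp hq, ?_⟩
      rwa [hPuniq _ _ p hp, hPuniq _ _ r hr] at hor
    have hdispC := PhyloTree.contract_displays T hab ia ib (↑Q) hdisp hnc'
    obtain ⟨φ, -, -⟩ := huniq _ hdispC
    have h1 : Nat.card {y : T.V // y ≠ b} = Nat.card T.V := Nat.card_congr φ
    have h2 := PhyloTree.contract_card T b
    have h3 : 0 < Nat.card T.V := by
      have : Finite T.V := T.finV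
      have : Nonempty T.V := ⟨a⟩
      exact Nat.card_pos
    omega
  -- Step 3 : there are n - 3 interior edges
  have hIE : {e : Sym2 T.V | T.InteriorEdge e}.ncard = n - 3 := by
    have := PhyloTree.interior_edge_count T hbin (by omega : 3 ≤ Fintype.card (Fin n))
    rwa [hL] at this
  -- Step 4 : injection from interior edges into Q
  have hchoose : ∀ e ∈ {e : Sym2 T.V | T.InteriorEdge e}, ∃ q ∈ (↑Q : Set (PhyloTree.Quartet (Fin n))),
      ∃ a b : T.V, e = s(a, b) ∧ T.G.Adj a b ∧
        a ∈ (P q.1 q.2.1).support ∧ b ∈ (P q.2.2.1 q.2.2.2).support := by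
    intro e he
    induction e with
    | _ a b =>
      have hadj : T.G.Adj a b := (SimpleGraph.mem_edgeSet _).mp he.1
      have ia : T.IsInterior a := he.2 a (Sym2.mem_mk_left _ _)
      have ib : T.IsInterior b := he.2 b (Sym2.mem_mk_right _ _)
      obtain ⟨q, hq, hor⟩ := hcross a b hadj ia ib
      rcases hor with ⟨h1, h2⟩ | ⟨h1, h2⟩
      · exact ⟨q, hq, a, b, rfl, hadj, h1, h2⟩
      · exact ⟨q, hq, b, a, Sym2.eq_swap, hadj.symm, h1, h2⟩
  choose f hfQ af bf hfe hfadj hfa hfb using hchoose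
  obtain ⟨q0, -, -⟩ := hcov ⟨0, by omega⟩
  have hFQ : ∀ e ∈ {e : Sym2 T.V | T.InteriorEdge e},
      (if h : e ∈ {e : Sym2 T.V | T.InteriorEdge e} then f e h else q0) ∈
        (↑Q : Set (PhyloTree.Quartet (Fin n))) := by
    intro e he
    rw [dif_pos he]
    exact hfQ e he
  have hinj : Set.InjOn (fun e => if h : e ∈ {e : Sym2 T.V | T.InteriorEdge e} then f e h else q0)
      {e : Sym2 T.V | T.InteriorEdge e} := by
    intro e1 h1 e2 h2 hEq
    simp only [dif_pos h1, dif_pos h2] at hEq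
    have hq1 := hfQ e1 h1
    have hdisj : ∀ x, x ∈ (P (f e1 h1).1 (f e1 h1).2.1).support →
        x ∉ (P (f e1 h1).2.2.1 (f e1 h1).2.2.2).support :=
      fun x hx => hdisp _ hq1 _ _ (hP _ _) (hP _ _) x hx
    have ha2 := hfa e2 h2
    rw [← hEq] at ha2
    have hb2 := hfb e2 h2
    rw [← hEq] at hb2
    have key := cross_unique T.isTree (P (f e1 h1).1 (f e1 h1).2.1)
      (P (f e1 h1).2.2.1 (f e1 h1).2.2.2) hdisj (hfadj e1 h1) (hfadj e2 h2)
      (hfa e1 h1) (hfb e1 h1) ha2 hb2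
    rw [hfe e1 h1, hfe e2 h2, key]
  have himg : (fun e => if h : e ∈ {e : Sym2 T.V | T.InteriorEdge e} then f e h else q0) ''
      {e : Sym2 T.V | T.InteriorEdge e} ⊆ (↑Q : Set (PhyloTree.Quartet (Fin n))) := by
    rintro x ⟨e, he, rfl⟩
    exact hFQ e he
  have hcard1 := (Set.ncard_image_of_injOn hinj).symm
  have hcard2 := Set.ncard_le_ncard himg (Set.toFinite _)
  have hcard3 : (↑Q : Set (PhyloTree.Quartet (Fin n))).ncard = Q.card :=
    Set.ncard_coe_finset Q
  omega
end
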